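/- arXiv:2205.04825 — 3 statements merged into one kernel-verified Lean document; each statement's English description precedes it below -/
import Mathlib

section
/- Let G be a connected bipartite graph with bipartition (X,Y) and n ≥ 2. Define the graph G̃_n with vertex set (X ∪ Y) × {1,…,n}, where for i = 1,…,n, H_i is a copy of G on bipartition (X_i, Y_i) and H_i' is a copy of G on bipartition (X_{i+1}, Y_i) (indices of X taken modulo n), and G̃_n = ⋃_{i=1}^n (H_i ∪ H_i'). Then κ(G̃_n) = min{n·κ(G), 2·δ(G)}. -/
open SimpleGraph

universe u v

variable {α : Type u} {β : Type v}

/-- Direct (tensor) product of two simple graphs. -/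
def SimpleGraph.tensorProd (G : SimpleGraph α) (H : SimpleGraph β) :
    SimpleGraph (α × β) where
  Adj x y := G.Adj x.1 y.1 ∧ H.Adj x.2 y.2
  symm := ⟨fun x y h => ⟨h.1.symm, h.2.symm⟩⟩
  loopless := ⟨fun x h => G.loopless.irrefl x.1 h.1⟩

/-- Direct (tensor) product of a family of simple graphs. -/
def SimpleGraph.piTensorProd {ι : Type*} {V : ι → Type*}
    (G : ∀ i, SimpleGraph (V i)) : SimpleGraph (∀ i, V i) where
  Adj f g := f ≠ g ∧ ∀ i, (G i).Adj (f i) (g i)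
  symm := ⟨fun f g h => ⟨h.1.symm, fun i => (h.2 i).symm⟩⟩
  loopless := ⟨fun f h => h.1 rfl⟩

/-- `S` is a vertex cut of `G`: deleting `S` leaves a disconnected graph. -/
def SimpleGraph.IsVertexCut (G : SimpleGraph α) (S : Set α) : Prop :=
  ¬ (G.induce Sᶜ).Connected

/-- Vertex connectivity: minimum size of a set `S` such that `G - S` is
disconnected or has at most one vertex. -/
noncomputable def SimpleGraph.vConn (G : SimpleGraph α) : ℕ :=
  sInf {n | ∃ S : Set α, S.ncard = n ∧
    (G.IsVertexCut S ∨ Nat.card α ≤ n + 1)}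

/-- Minimum degree (via neighbor set cardinalities). -/
noncomputable def SimpleGraph.minDeg (G : SimpleGraph α) : ℕ :=
  sInf {d | ∃ v, (G.neighborSet v).ncard = d}

/-- A minimum vertex cut. -/
def SimpleGraph.IsMinVertexCut (G : SimpleGraph α) (S : Set α) : Prop :=
  G.IsVertexCut S ∧ S.ncard = G.vConn

/-- `G` is super connected: every minimum vertex cut is the neighborhood of a
vertex of minimum degree. -/
def SimpleGraph.SuperConnected (G : SimpleGraph α) : Prop :=
  ∀ S : Set α, G.IsMinVertexCut S →
    ∃ v, (G.neighborSet v).ncard = G.minDeg ∧ S = G.neighborSet v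

/-- `(X, Y)` is a bipartition of `G`. -/
def SimpleGraph.IsBipartition (G : SimpleGraph α) (X Y : Set α) : Prop :=
  Disjoint X Y ∧ X ∪ Y = Set.univ ∧
    ∀ u v, G.Adj u v → (u ∈ X ∧ v ∈ Y) ∨ (u ∈ Y ∧ v ∈ X)

/-- The graph `G̃ₙ`: vertex set `α × ZMod n`, with for each `i` a copy `Hᵢ`
of `G` on `(Xᵢ, Yᵢ)` and a copy `Hᵢ'` of `G` on `(Xᵢ₊₁, Yᵢ)`. -/
def tildeG (G : SimpleGraph α) (X Y : Set α) (n : ℕ) :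
    SimpleGraph (α × ZMod n) where
  Adj a b := G.Adj a.1 b.1 ∧
    ((a.1 ∈ X ∧ b.1 ∈ Y ∧ (a.2 = b.2 ∨ a.2 = b.2 + 1)) ∨
     (a.1 ∈ Y ∧ b.1 ∈ X ∧ (b.2 = a.2 ∨ b.2 = a.2 + 1)))
  symm := ⟨fun a b h => ⟨h.1.symm, by tauto⟩⟩
  loopless := ⟨fun a h => G.loopless.irrefl a.1 h.1⟩
section Aux
variable {α : Type u}

lemma vConn_mem_le (G : SimpleGraph α) (S : Set α)
    (h : G.IsVertexCut S ∨ Nat.card α ≤ S.ncard + 1) : G.vConn ≤ S.ncard :=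
  Nat.sInf_le ⟨S, rfl, h⟩

lemma univ_isVertexCut (G : SimpleGraph α) : G.IsVertexCut (Set.univ : Set α) := by
  intro h
  have h2 := h.nonempty
  rw [Set.compl_univ] at h2
  exact (Set.not_nonempty_empty (Set.nonempty_coe_sort.mp h2))

lemma vConn_set_nonempty (G : SimpleGraph α) :
    {k | ∃ S : Set α, S.ncard = k ∧ (G.IsVertexCut S ∨ Nat.card α ≤ k + 1)}.Nonempty :=
  ⟨(Set.univ : Set α).ncard, Set.univ, rfl, Or.inl (univ_isVertexCut G)⟩

lemma exists_vConn_witness (G : SimpleGraph α) :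
    ∃ S : Set α, S.ncard = G.vConn ∧ (G.IsVertexCut S ∨ Nat.card α ≤ G.vConn + 1) :=
  Nat.sInf_mem (vConn_set_nonempty G)

lemma minDeg_le (G : SimpleGraph α) (v : α) : G.minDeg ≤ (G.neighborSet v).ncard :=
  Nat.sInf_le ⟨v, rfl⟩

lemma exists_minDeg (G : SimpleGraph α) [Nonempty α] :
    ∃ v : α, (G.neighborSet v).ncard = G.minDeg := by
  obtain ⟨v⟩ := ‹Nonempty α›
  have hne : {d | ∃ v, (G.neighborSet v).ncard = d}.Nonempty := ⟨(G.neighborSet v).ncard, ⟨v, rfl⟩⟩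
  exact Nat.sInf_mem hne

lemma vConn_le_pred [Finite α] [Nonempty α] (G : SimpleGraph α) :
    G.vConn + 1 ≤ Nat.card α := by
  obtain ⟨v⟩ := ‹Nonempty α›
  have h1 : (Set.univ \ {v} : Set α).ncard + 1 = Nat.card α := by
    rw [← Set.ncard_univ (α := α)]
    exact Set.ncard_diff_singleton_add_one (Set.mem_univ v) (Set.toFinite _)
  have := vConn_mem_le G (Set.univ \ {v}) (Or.inr (by omega))
  omega

lemma reachable_first_step {G : SimpleGraph α} {a b : α} (h : G.Reachable a b)
    (hne : a ≠ b) : ∃ c, G.Adj a c := by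
  obtain ⟨w⟩ := h
  cases w with
  | nil => exact absurd rfl hne
  | cons h p => exact ⟨_, h⟩

lemma reachable_eq_of_no_adj {G : SimpleGraph α} (hadj : ∀ a b, ¬ G.Adj a b)
    {a b : α} (h : G.Reachable a b) : a = b := by
  obtain ⟨w⟩ := h
  cases w with
  | nil => rfl
  | cons h p => exact absurd h (hadj _ _)

end Aux
section Cycle

open Classical in
lemma exists_least {P : ℕ → Prop} (h : ∃ k, P k) :
    ∃ k, P k ∧ ∀ m, m < k → ¬ P m :=
  ⟨Nat.find h, Nat.find_spec h, fun m hm => Nat.find_min h hm⟩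

/-- In a cycle `ZMod M`, if all "boundary" elements of `Wᶜ` coincide, then
`Wᶜ` has at most one element. -/
lemma cycle_singleton {M : ℕ} (hM : 2 ≤ M) (W : Set (ZMod M)) (hW : W.Nonempty)
    (huniq : ∀ j₁ j₂ : ZMod M, j₁ ∉ W → j₂ ∉ W →
      (j₁ + 1 ∈ W ∨ j₁ - 1 ∈ W) → (j₂ + 1 ∈ W ∨ j₂ - 1 ∈ W) → j₁ = j₂) :
    ∀ c c', c ∉ W → c' ∉ W → c = c' := by
  haveI : NeZero M := ⟨by omega⟩
  have key : ∀ c, c ∉ W → (c + 1 ∈ W ∨ c - 1 ∈ W) := by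
    intro c hc
    obtain ⟨a, ha⟩ := hW
    have hane : a ≠ c := fun h => hc (h ▸ ha)
    have hex : ∃ k : ℕ, (0 < k ∧ k ≤ M - 1) ∧ c + (k : ZMod M) ∈ W := by
      refine ⟨(a - c).val, ⟨?_, ?_⟩, ?_⟩
      · rcases Nat.eq_zero_or_pos (a - c).val with h | h
        · exfalso
          have h0 : a - c = 0 := by
            have h1 := ZMod.natCast_rightInverse (n := M) (a - c)
            rw [h] at h1; simpa using h1.symm
          exact hane (sub_eq_zero.mp h0)
        · exact h
      · have := ZMod.val_lt (a - c); omega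
      · have h1 : ((a - c).val : ZMod M) = a - c := ZMod.natCast_rightInverse _
        rw [h1]; simpa using ha
    have hexm : ∃ l : ℕ, (0 < l ∧ l ≤ M - 1) ∧ c - (l : ZMod M) ∈ W := by
      refine ⟨(c - a).val, ⟨?_, ?_⟩, ?_⟩
      · rcases Nat.eq_zero_or_pos (c - a).val with h | h
        · exfalso
          have h0 : c - a = 0 := by
            have h1 := ZMod.natCast_rightInverse (n := M) (c - a)
            rw [h] at h1; simpa using h1.symm
          exact hane (sub_eq_zero.mp h0).symm
        · exact h
      · have := ZMod.val_lt (c - a); omega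
      · have h1 : ((c - a).val : ZMod M) = c - a := ZMod.natCast_rightInverse _
        rw [h1]; simpa using ha
    obtain ⟨k, ⟨⟨hkpos, hkle⟩, hkmem⟩, hkmin⟩ := exists_least hex
    obtain ⟨l, ⟨⟨hlpos, hlle⟩, hlmem⟩, hlmin⟩ := exists_least hexm
    by_contra hcb
    push_neg at hcb
    -- k ≥ 2 and l ≥ 2
    have hk1 : 2 ≤ k := by
      rcases Nat.lt_or_ge k 2 with h | h
      · exfalso
        have hk : k = 1 := by omega
        rw [hk] at hkmem; push_cast at hkmem
        exact hcb.1 hkmem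
      · exact h
    have hl1 : 2 ≤ l := by
      rcases Nat.lt_or_ge l 2 with h | h
      · exfalso
        have hl : l = 1 := by omega
        rw [hl] at hlmem; push_cast at hlmem
        exact hcb.2 hlmem
      · exact h
    -- the two boundary points
    have hjp_not : c + ((k - 1 : ℕ) : ZMod M) ∉ W := fun hmem =>
      hkmin (k-1) (by omega) ⟨⟨by omega, by omega⟩, hmem⟩
    have hjp_b : (c + ((k - 1 : ℕ) : ZMod M)) + 1 ∈ W := by
      have h2 : ((k - 1 : ℕ) : ZMod M) + 1 = (k : ZMod M) := by
        have h3 : (k - 1) + 1 = k := by omega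
        calc ((k - 1 : ℕ) : ZMod M) + 1 = (((k - 1) + 1 : ℕ) : ZMod M) := by push_cast; ring
        _ = (k : ZMod M) := by rw [h3]
      rw [add_assoc, h2]; exact hkmem
    have hjm_not : c - ((l - 1 : ℕ) : ZMod M) ∉ W := fun hmem =>
      hlmin (l-1) (by omega) ⟨⟨by omega, by omega⟩, hmem⟩
    have hjm_b : (c - ((l - 1 : ℕ) : ZMod M)) - 1 ∈ W := by
      have h2 : ((l - 1 : ℕ) : ZMod M) + 1 = (l : ZMod M) := by
        have h3 : (l - 1) + 1 = l := by omega
        calc ((l - 1 : ℕ) : ZMod M) + 1 = (((l - 1) + 1 : ℕ) : ZMod M) := by push_cast; ring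
        _ = (l : ZMod M) := by rw [h3]
      have h4 : (c - ((l - 1 : ℕ) : ZMod M)) - 1 = c - (l : ZMod M) := by
        rw [← h2]; ring
      rw [h4]; exact hlmem
    have heq : c + ((k - 1 : ℕ) : ZMod M) = c - ((l - 1 : ℕ) : ZMod M) :=
      huniq _ _ hjp_not hjm_not (Or.inl hjp_b) (Or.inr hjm_b)
    have hz : ((k - 1 : ℕ) : ZMod M) + ((l - 1 : ℕ) : ZMod M) = 0 := by
      linear_combination heq
    have hsum : (((k - 1) + (l - 1) : ℕ) : ZMod M) = 0 := by
      rw [Nat.cast_add]; exact hz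
    have hdvd : M ∣ (k - 1) + (l - 1) := (ZMod.natCast_eq_zero_iff _ _).mp hsum
    have hsumM : (k - 1) + (l - 1) = M := by
      rcases hdvd with ⟨t, ht⟩
      rcases Nat.lt_or_ge t 2 with h | h
      · interval_cases t <;> omega
      · exfalso
        have : M * 2 ≤ M * t := Nat.mul_le_mul_left M h
        omega
    -- contradiction: c + k ∈ W but also c + k = c - (l-2) with 0 < l-2 < l
    have hck : c + (k : ZMod M) = c - ((l - 2 : ℕ) : ZMod M) := by
      have h5 : (k : ℕ) + (l - 2) = M := by omega
      have h6 : ((k : ℕ) : ZMod M) + ((l - 2 : ℕ) : ZMod M) = 0 := by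
        calc ((k : ℕ) : ZMod M) + ((l - 2 : ℕ) : ZMod M)
            = (((k : ℕ) + (l - 2) : ℕ) : ZMod M) := by push_cast; ring
        _ = ((M : ℕ) : ZMod M) := by rw [h5]
        _ = 0 := ZMod.natCast_self M
      linear_combination h6
    have hl2pos : 0 < l - 2 := by omega
    rw [hck] at hkmem
    exact hlmin (l - 2) (by omega) ⟨⟨hl2pos, by omega⟩, hkmem⟩
  intro c c' hc hc'
  exact huniq c c' hc hc' (key c hc) (key c' hc')

end Cycle
section CycleMain

/-- `j` is a "charged" index for predicates `P`, `Q` on the cycle. -/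
def Charged {M : ℕ} (P Q : ZMod M → Prop) (j : ZMod M) : Prop :=
  (¬ P j ∧ (P (j+1) ∨ P (j-1))) ∨ (¬ Q j ∧ (Q (j+1) ∨ Q (j-1)))

lemma self_ne_add_one {M : ℕ} (hM : 2 ≤ M) (j : ZMod M) : j ≠ j + 1 := by
  haveI : NeZero M := ⟨by omega⟩
  intro h
  have h1 : (1 : ZMod M) = 0 := by linear_combination -h
  have := ZMod.val_one_eq_one_mod M
  rw [h1] at this
  simp [ZMod.val_zero] at this
  omega

lemma cycle_two_charged {M : ℕ} (hM : 2 ≤ M) (P Q : ZMod M → Prop)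
    (hP : ∃ j, P j) (hQ : ∃ j, Q j) :
    (∃ j₁ j₂ : ZMod M, j₁ ≠ j₂ ∧ Charged P Q j₁ ∧ Charged P Q j₂) ∨
    (∀ j : ZMod M, (P j ∨ P (j+1)) ∧ (Q j ∨ Q (j+1))) := by
  classical
  -- helper: either a predicate holds off a single point, or we get two charged indices
  have step : ∀ (R : ZMod M → Prop), (∃ j, R j) → (∃ j, ¬ R j) →
      (∀ j, (¬ R j ∧ (R (j+1) ∨ R (j-1))) → Charged P Q j) →
      (∃ j₁ j₂ : ZMod M, j₁ ≠ j₂ ∧ Charged P Q j₁ ∧ Charged P Q j₂) ∨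
      (∃ j₀, (∀ j, j ≠ j₀ → R j) ∧ Charged P Q j₀) := by
    intro R hR hRc hch
    by_cases htwo : ∃ j₁ j₂ : ZMod M, j₁ ≠ j₂ ∧
        (¬ R j₁ ∧ (R (j₁+1) ∨ R (j₁-1))) ∧ (¬ R j₂ ∧ (R (j₂+1) ∨ R (j₂-1)))
    · obtain ⟨j₁, j₂, hne, h1, h2⟩ := htwo
      exact Or.inl ⟨j₁, j₂, hne, hch _ h1, hch _ h2⟩
    · push_neg at htwo
      have huniq : ∀ j₁ j₂ : ZMod M, j₁ ∉ {j | R j} → j₂ ∉ {j | R j} →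
          (j₁ + 1 ∈ {j | R j} ∨ j₁ - 1 ∈ {j | R j}) →
          (j₂ + 1 ∈ {j | R j} ∨ j₂ - 1 ∈ {j | R j}) → j₁ = j₂ := by
        intro j₁ j₂ h1 h2 h3 h4
        by_contra hne
        have hh := htwo j₁ j₂ hne ⟨h1, h3⟩ h2
        rcases h4 with h4 | h4
        · exact hh.1 h4
        · exact hh.2 h4
      have hsing := cycle_singleton hM {j | R j} hR huniq
      obtain ⟨j₀, hj₀⟩ := hRc
      refine Or.inr ⟨j₀, fun j hj => ?_, ?_⟩
      · by_contra hRj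
        exact hj (hsing j j₀ hRj hj₀)
      · -- j₀ is charged: its neighbor j₀ + 1 satisfies R
        have hR1 : R (j₀ + 1) := by
          by_contra h
          exact (self_ne_add_one hM j₀) (hsing j₀ (j₀+1) hj₀ h)
        exact hch j₀ ⟨hj₀, Or.inl hR1⟩
  by_cases hPall : ∀ j, P j
  · by_cases hQall : ∀ j, Q j
    · exact Or.inr (fun j => ⟨Or.inl (hPall j), Or.inl (hQall j)⟩)
    · push_neg at hQall
      rcases step Q hQ hQall (fun j h => Or.inr h) with h | ⟨j₀, hoff, _⟩
      · exact Or.inl h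
      · refine Or.inr (fun j => ⟨Or.inl (hPall j), ?_⟩)
        rcases eq_or_ne j j₀ with rfl | hne
        · exact Or.inr (hoff _ (self_ne_add_one hM j).symm)
        · exact Or.inl (hoff _ hne)
  · push_neg at hPall
    rcases step P hP hPall (fun j h => Or.inl h) with h | ⟨j₁, hoffP, hchP⟩
    · exact Or.inl h
    · by_cases hQall : ∀ j, Q j
      · refine Or.inr (fun j => ⟨?_, Or.inl (hQall j)⟩)
        rcases eq_or_ne j j₁ with rfl | hne
        · exact Or.inr (hoffP _ (self_ne_add_one hM j).symm)
        · exact Or.inl (hoffP _ hne)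
      · push_neg at hQall
        rcases step Q hQ hQall (fun j h => Or.inr h) with h | ⟨j₂, hoffQ, hchQ⟩
        · exact Or.inl h
        · rcases eq_or_ne j₁ j₂ with rfl | hne
          · refine Or.inr (fun j => ⟨?_, ?_⟩)
            · rcases eq_or_ne j j₁ with rfl | hne
              · exact Or.inr (hoffP _ (self_ne_add_one hM j).symm)
              · exact Or.inl (hoffP _ hne)
            · rcases eq_or_ne j j₁ with rfl | hne
              · exact Or.inr (hoffQ _ (self_ne_add_one hM j).symm)
              · exact Or.inl (hoffQ _ hne)
          · exact Or.inl ⟨j₁, j₂, hne, hchP, hchQ⟩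

end CycleMain
section Slots
variable {α : Type u}

/-- The underlying set (`X` or `Y`) of the `j`-th "slot". -/
def zpart (X Y : Set α) {M : ℕ} (j : ZMod M) : Set α := if j.val % 2 = 0 then X else Y

/-- The column of the `j`-th slot. -/
def colOf {n : ℕ} (j : ZMod (2*n)) : ZMod n := ((j.val / 2 : ℕ) : ZMod n)

/-- The `j`-th slot: `X_i` or `Y_i` as a subset of the vertices of `G̃ₙ`. -/
def slot (X Y : Set α) {n : ℕ} (j : ZMod (2*n)) : Set (α × ZMod n) :=
  {p | p.1 ∈ zpart X Y j ∧ p.2 = colOf j}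

lemma two_n_pos {n : ℕ} (hn : 1 ≤ n) : 0 < 2 * n := by omega

lemma val_succ {n : ℕ} (hn : 1 ≤ n) (j : ZMod (2*n)) :
    (j + 1).val = (j.val + 1) % (2*n) := by
  haveI : NeZero (2*n) := ⟨by omega⟩
  haveI : Fact (1 < 2*n) := ⟨by omega⟩
  rw [ZMod.val_add, ZMod.val_one]

lemma slot_step {n : ℕ} (hn : 1 ≤ n) (X Y : Set α) (j : ZMod (2*n)) :
    (zpart X Y j = X ∧ zpart X Y (j+1) = Y ∧ colOf (j+1) = colOf j) ∨
    (zpart X Y j = Y ∧ zpart X Y (j+1) = X ∧ colOf (j+1) = colOf j + 1) := by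
  haveI : NeZero (2*n) := ⟨by omega⟩
  have hjlt : j.val < 2*n := ZMod.val_lt j
  have hv := val_succ hn j
  by_cases hpar : j.val % 2 = 0
  · left
    have h1 : j.val + 1 < 2*n := by omega
    have hv1 : (j+1).val = j.val + 1 := by rw [hv, Nat.mod_eq_of_lt h1]
    refine ⟨if_pos hpar, ?_, ?_⟩
    · have : (j+1).val % 2 = 1 := by omega
      simp only [zpart, hv1]
      rw [if_neg (by omega)]
    · simp only [colOf, hv1]
      congr 1
      omega
  · right
    refine ⟨by simp only [zpart]; rw [if_neg hpar], ?_, ?_⟩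
    · by_cases h1 : j.val + 1 < 2*n
      · have hv1 : (j+1).val = j.val + 1 := by rw [hv, Nat.mod_eq_of_lt h1]
        simp only [zpart, hv1]
        rw [if_pos (by omega)]
      · have hv1 : (j+1).val = 0 := by
          have : j.val + 1 = 2*n := by omega
          rw [hv, this, Nat.mod_self]
        simp only [zpart, hv1]
        simp
    · by_cases h1 : j.val + 1 < 2*n
      · have hv1 : (j+1).val = j.val + 1 := by rw [hv, Nat.mod_eq_of_lt h1]
        simp only [colOf, hv1]
        have h2 : (j.val + 1) / 2 = j.val / 2 + 1 := by omega
        rw [h2]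
        push_cast
        ring
      · have h2 : j.val + 1 = 2*n := by omega
        have hv1 : (j+1).val = 0 := by rw [hv, h2, Nat.mod_self]
        simp only [colOf, hv1]
        have h3 : j.val / 2 = n - 1 := by omega
        rw [h3]
        have h4 : ((n - 1 : ℕ) : ZMod n) + 1 = ((n : ℕ) : ZMod n) := by
          have h5 : (n - 1) + 1 = n := by omega
          calc ((n - 1 : ℕ) : ZMod n) + 1 = (((n-1) + 1 : ℕ) : ZMod n) := by push_cast; ring
          _ = ((n : ℕ) : ZMod n) := by rw [h5]
        rw [eq_comm, h4, ZMod.natCast_self]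
        simp

lemma adj_slot {n : ℕ} (hn : 1 ≤ n) {G : SimpleGraph α} {X Y : Set α}
    (j : ZMod (2*n)) {u v : α}
    (hu : u ∈ zpart X Y j) (hv : v ∈ zpart X Y (j+1)) (huv : G.Adj u v) :
    (tildeG G X Y n).Adj (u, colOf j) (v, colOf (j+1)) := by
  rcases slot_step hn X Y j with ⟨h1, h2, h3⟩ | ⟨h1, h2, h3⟩
  · exact ⟨huv, Or.inl ⟨h1 ▸ hu, h2 ▸ hv, Or.inl h3.symm⟩⟩
  · exact ⟨huv, Or.inr ⟨h1 ▸ hu, h2 ▸ hv, Or.inr h3⟩⟩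

lemma slot_cover {n : ℕ} (hn : 1 ≤ n) {X Y : Set α} (hcov : X ∪ Y = Set.univ)
    (p : α × ZMod n) : ∃ j : ZMod (2*n), p ∈ slot X Y j := by
  haveI : NeZero (2*n) := ⟨by omega⟩
  haveI : NeZero n := ⟨by omega⟩
  have hp : p.1 ∈ X ∪ Y := by rw [hcov]; exact Set.mem_univ _
  have hvlt : p.2.val < n := ZMod.val_lt p.2
  rcases hp with hp | hp
  · refine ⟨((2 * p.2.val : ℕ) : ZMod (2*n)), ?_, ?_⟩
    · have hval : ((2 * p.2.val : ℕ) : ZMod (2*n)).val = 2 * p.2.val := by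
        rw [ZMod.val_natCast, Nat.mod_eq_of_lt (by omega)]
      simp only [zpart, hval]
      rw [if_pos (by omega)]
      exact hp
    · have hval : ((2 * p.2.val : ℕ) : ZMod (2*n)).val = 2 * p.2.val := by
        rw [ZMod.val_natCast, Nat.mod_eq_of_lt (by omega)]
      simp only [colOf, hval]
      have : 2 * p.2.val / 2 = p.2.val := by omega
      rw [this]
      exact (ZMod.natCast_rightInverse p.2).symm
  · refine ⟨((2 * p.2.val + 1 : ℕ) : ZMod (2*n)), ?_, ?_⟩
    · have hval : ((2 * p.2.val + 1 : ℕ) : ZMod (2*n)).val = 2 * p.2.val + 1 := by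
        rw [ZMod.val_natCast, Nat.mod_eq_of_lt (by omega)]
      simp only [zpart, hval]
      rw [if_neg (by omega)]
      exact hp
    · have hval : ((2 * p.2.val + 1 : ℕ) : ZMod (2*n)).val = 2 * p.2.val + 1 := by
        rw [ZMod.val_natCast, Nat.mod_eq_of_lt (by omega)]
      simp only [colOf, hval]
      have : (2 * p.2.val + 1) / 2 = p.2.val := by omega
      rw [this]
      exact (ZMod.natCast_rightInverse p.2).symm

lemma slot_disjoint {n : ℕ} (hn : 1 ≤ n) {X Y : Set α} (hd : Disjoint X Y)
    {j j' : ZMod (2*n)} (hne : j ≠ j') :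
    Disjoint (slot X Y j) (slot X Y j') := by
  haveI : NeZero (2*n) := ⟨by omega⟩
  haveI : NeZero n := ⟨by omega⟩
  have hvne : j.val ≠ j'.val := by
    intro h
    exact hne (by
      have h1 := ZMod.natCast_rightInverse (n := 2*n) j
      have h2 := ZMod.natCast_rightInverse (n := 2*n) j'
      rw [← h1, ← h2, h])
  rw [Set.disjoint_left]
  rintro p ⟨hp1, hp2⟩ ⟨hq1, hq2⟩
  by_cases hpar : j.val % 2 = j'.val % 2
  · -- same parity : columns differ
    have hj : j.val < 2*n := ZMod.val_lt j
    have hj' : j'.val < 2*n := ZMod.val_lt j'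
    have hdiv : j.val / 2 ≠ j'.val / 2 := by omega
    have : colOf j ≠ colOf (n := n) j' := by
      simp only [colOf]
      intro h
      have e1 : (↑(j.val / 2) : ZMod n).val = j.val / 2 := by
        rw [ZMod.val_natCast, Nat.mod_eq_of_lt (by omega)]
      have e2 : (↑(j'.val / 2) : ZMod n).val = j'.val / 2 := by
        rw [ZMod.val_natCast, Nat.mod_eq_of_lt (by omega)]
      rw [← e1, ← e2, h] at hdiv
      exact hdiv rfl
    exact this (hp2 ▸ hq2 ▸ rfl)
  · -- different parity : X meets Y
    simp only [zpart] at hp1 hq1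
    by_cases h0 : j.val % 2 = 0
    · rw [if_pos h0] at hp1
      rw [if_neg (by omega)] at hq1
      exact Set.disjoint_left.mp hd hp1 hq1
    · rw [if_neg h0] at hp1
      rw [if_pos (by omega)] at hq1
      exact Set.disjoint_left.mp hd hq1 hp1

/-- The even slot of column `i`. -/
lemma slot_column {n : ℕ} (hn : 1 ≤ n) (X Y : Set α) (i : ZMod n) :
    ∃ j : ZMod (2*n), zpart X Y j = X ∧ zpart X Y (j+1) = Y ∧
      colOf j = i ∧ colOf (j+1) = i := by
  haveI : NeZero (2*n) := ⟨by omega⟩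
  haveI : NeZero n := ⟨by omega⟩
  have hvlt : i.val < n := ZMod.val_lt i
  refine ⟨((2 * i.val : ℕ) : ZMod (2*n)), ?_⟩
  have hval : ((2 * i.val : ℕ) : ZMod (2*n)).val = 2 * i.val := by
    rw [ZMod.val_natCast, Nat.mod_eq_of_lt (by omega)]
  have hval1 : (((2 * i.val : ℕ) : ZMod (2*n)) + 1).val = 2 * i.val + 1 := by
    rw [val_succ hn, hval, Nat.mod_eq_of_lt (by omega)]
  refine ⟨?_, ?_, ?_, ?_⟩
  · simp only [zpart, hval]; rw [if_pos (by omega)]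
  · simp only [zpart, hval1]; rw [if_neg (by omega)]
  · simp only [colOf, hval]
    have : 2 * i.val / 2 = i.val := by omega
    rw [this]; exact ZMod.natCast_rightInverse i
  · simp only [colOf, hval1]
    have : (2 * i.val + 1) / 2 = i.val := by omega
    rw [this]; exact ZMod.natCast_rightInverse i

end Slots
section Lower
variable {α : Type u}

lemma bip_edge [Finite α] {G : SimpleGraph α} (hGc : G.Connected)
    (hm : 2 ≤ Nat.card α) : ∃ u v, G.Adj u v := by
  haveI : Nonempty α := hGc.nonempty
  have hnt : Nontrivial α := Finite.one_lt_card_iff_nontrivial.mp (by omega)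
  obtain ⟨a, b, hab⟩ := hnt
  obtain ⟨c, hc⟩ := reachable_first_step (hGc.preconnected a b) hab
  exact ⟨a, c, hc⟩

lemma bip_facts [Finite α] {G : SimpleGraph α} {X Y : Set α} (hGc : G.Connected)
    (hbip : G.IsBipartition X Y) (hm : 2 ≤ Nat.card α) :
    X.Nonempty ∧ Y.Nonempty ∧ G.minDeg ≤ X.ncard ∧ G.minDeg ≤ Y.ncard := by
  obtain ⟨u, v, huv⟩ := bip_edge hGc hm
  have hXY : X.Nonempty ∧ Y.Nonempty := by
    rcases hbip.2.2 u v huv with ⟨h1, h2⟩ | ⟨h1, h2⟩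
    · exact ⟨⟨u, h1⟩, ⟨v, h2⟩⟩
    · exact ⟨⟨v, h2⟩, ⟨u, h1⟩⟩
  refine ⟨hXY.1, hXY.2, ?_, ?_⟩
  · obtain ⟨y, hy⟩ := hXY.2
    refine le_trans (minDeg_le G y) (Set.ncard_le_ncard ?_ (Set.toFinite _))
    intro x hx
    rcases hbip.2.2 y x hx with ⟨h1, h2⟩ | ⟨h1, h2⟩
    · exact (Set.disjoint_left.mp hbip.1 h1 hy).elim
    · exact h2
  · obtain ⟨x, hx⟩ := hXY.1
    refine le_trans (minDeg_le G x) (Set.ncard_le_ncard ?_ (Set.toFinite _))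
    intro y hy
    rcases hbip.2.2 x y hy with ⟨h1, h2⟩ | ⟨h1, h2⟩
    · exact h2
    · exact (Set.disjoint_left.mp hbip.1 hx h1).elim

lemma tilde_lower_bound [Finite α] {G : SimpleGraph α} {X Y : Set α}
    (hGc : G.Connected) (hbip : G.IsBipartition X Y) {n : ℕ} (hn : 2 ≤ n)
    (S : Set (α × ZMod n)) (hcut : (tildeG G X Y n).IsVertexCut S) :
    min (n * G.vConn) (2 * G.minDeg) ≤ S.ncard := by
  classical
  haveI : Nonempty α := hGc.nonempty
  haveI : NeZero n := ⟨by omega⟩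
  set Gt := tildeG G X Y n with hGt
  by_contra hlt
  push_neg at hlt
  have hS1 : S.ncard < n * G.vConn := lt_of_lt_of_le hlt (min_le_left _ _)
  have hS2 : S.ncard < 2 * G.minDeg := lt_of_lt_of_le hlt (min_le_right _ _)
  -- the case of a one-point graph
  by_cases hm : 2 ≤ Nat.card α
  case neg =>
    have hm1 : Nat.card α = 1 := by
      have := Nat.card_pos (α := α)
      omega
    have hk0 : G.vConn = 0 := by
      have := vConn_mem_le G ∅ (Or.inr (by simp [hm1]))
      simpa using this
    rw [hk0, Nat.mul_zero] at hS1
    omega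
  -- now `α` has at least 2 elements
  obtain ⟨hXne, hYne, hdX, hdY⟩ := bip_facts hGc hbip hm
  have hmcard : Nat.card α = X.ncard + Y.ncard := by
    rw [← Set.ncard_univ, ← hbip.2.1]
    exact (Set.ncard_union_eq hbip.1 (Set.toFinite _) (Set.toFinite _))
  -- survivors exist
  by_cases hSc : (Sᶜ : Set (α × ZMod n)).Nonempty
  case neg =>
    -- S is everything
    rw [Set.not_nonempty_iff_eq_empty, ← Set.compl_univ, compl_inj_iff] at hSc
    have : (2 * n) ≤ 2 * n := le_refl _
    have hcard : S.ncard = Nat.card (α × ZMod n) := by rw [hSc, Set.ncard_univ]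
    have hprod : Nat.card (α × ZMod n) = Nat.card α * n := by
      rw [Nat.card_prod]
      congr 1
      rw [Nat.card_eq_fintype_card, ZMod.card]
    have h2d : 2 * G.minDeg ≤ Nat.card α := by omega
    have : Nat.card α ≤ Nat.card α * n := Nat.le_mul_of_pos_right _ (by omega)
    omega
  -- unreachable pair
  obtain ⟨za, zb, hzr⟩ : ∃ a b : ↥(Sᶜ), ¬ (Gt.induce Sᶜ).Reachable a b := by
    by_contra h
    push_neg at h
    haveI : Nonempty ↥(Sᶜ) := Set.nonempty_coe_sort.mpr hSc
    exact hcut ⟨fun a b => h a b⟩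
  set It := Gt.induce Sᶜ with hIt
  -- sides
  have hadj_ind : ∀ (p q : α × ZMod n) (hp : p ∈ Sᶜ) (hq : q ∈ Sᶜ), Gt.Adj p q →
      It.Adj ⟨p, hp⟩ ⟨q, hq⟩ := fun p q hp hq h => h
  have hprop : ∀ (p q : α × ZMod n) (hp : p ∈ Sᶜ) (hq : q ∈ Sᶜ), Gt.Adj p q →
      (It.Reachable za ⟨p, hp⟩ ↔ It.Reachable za ⟨q, hq⟩) := by
    intro p q hp hq h
    constructor
    · intro hr; exact hr.trans (hadj_ind p q hp hq h).reachable
    · intro hr; exact hr.trans (hadj_ind q p hq hp h.symm).reachable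
  -- the two side-predicates on slots
  set P : ZMod (2*n) → Prop :=
    fun j => ∃ p, ∃ hp : p ∈ Sᶜ, p ∈ slot X Y j ∧ It.Reachable za ⟨p, hp⟩ with hPdef
  set Q : ZMod (2*n) → Prop :=
    fun j => ∃ p, ∃ hp : p ∈ Sᶜ, p ∈ slot X Y j ∧ ¬ It.Reachable za ⟨p, hp⟩ with hQdef
  have hn1 : 1 ≤ n := by omega
  have hP : ∃ j, P j := by
    obtain ⟨j, hj⟩ := slot_cover hn1 hbip.2.1 (za : α × ZMod n)
    exact ⟨j, (za : α × ZMod n), za.2, hj, Reachable.refl _⟩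
  have hQ : ∃ j, Q j := by
    obtain ⟨j, hj⟩ := slot_cover hn1 hbip.2.1 (zb : α × ZMod n)
    exact ⟨j, (zb : α × ZMod n), zb.2, hj, hzr⟩
  -- charged slots carry δ vertices of S
  have hblock : ∀ (j j' : ZMod (2*n)), (j = j' + 1 ∨ j' = j + 1) →
      ∀ (R : Prop → Prop), (R = id ∨ R = Not) →
      (¬ ∃ p, ∃ hp : p ∈ Sᶜ, p ∈ slot X Y j' ∧ R (It.Reachable za ⟨p, hp⟩)) →
      (∃ p, ∃ hp : p ∈ Sᶜ, p ∈ slot X Y j ∧ R (It.Reachable za ⟨p, hp⟩)) →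
      G.minDeg ≤ (S ∩ slot X Y j').ncard := by
    intro j j' hjj' R hR hnot hyes
    obtain ⟨p, hp, hpslot, hpR⟩ := hyes
    -- p = (u, colOf j) with u ∈ zpart j
    obtain ⟨u, i⟩ := p
    obtain ⟨hu, hi⟩ := hpslot
    simp only at hu hi
    subst hi
    -- key facts: u's neighbors lie in `zpart j'` and are adjacent (in Gt) to the witness
    have hmain : (G.neighborSet u ⊆ zpart X Y j') ∧
        ∀ x ∈ G.neighborSet u, Gt.Adj (x, colOf j') (u, colOf j) := by
      rcases hjj' with hjj' | hjj'
      · subst hjj'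
        rcases slot_step hn1 X Y j' with ⟨h1, h2, h3⟩ | ⟨h1, h2, h3⟩
        · rw [h2] at hu
          rw [h1]
          have hnb : ∀ x ∈ G.neighborSet u, x ∈ X := by
            intro x hx
            rcases hbip.2.2 u x hx with ⟨hh1, hh2⟩ | ⟨hh1, hh2⟩
            · exact (Set.disjoint_left.mp hbip.1 hh1 hu).elim
            · exact hh2
          refine ⟨hnb, fun x hx => ?_⟩
          exact adj_slot hn1 j' (by rw [h1]; exact hnb x hx) (by rw [h2]; exact hu) (G.adj_symm hx)
        · rw [h2] at hu
          rw [h1]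
          have hnb : ∀ x ∈ G.neighborSet u, x ∈ Y := by
            intro x hx
            rcases hbip.2.2 u x hx with ⟨hh1, hh2⟩ | ⟨hh1, hh2⟩
            · exact hh2
            · exact (Set.disjoint_left.mp hbip.1 hu hh1).elim
          refine ⟨hnb, fun x hx => ?_⟩
          exact adj_slot hn1 j' (by rw [h1]; exact hnb x hx) (by rw [h2]; exact hu) (G.adj_symm hx)
      · subst hjj'
        rcases slot_step hn1 X Y j with ⟨h1, h2, h3⟩ | ⟨h1, h2, h3⟩
        · rw [h1] at hu
          rw [h2]
          have hnb : ∀ x ∈ G.neighborSet u, x ∈ Y := by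
            intro x hx
            rcases hbip.2.2 u x hx with ⟨hh1, hh2⟩ | ⟨hh1, hh2⟩
            · exact hh2
            · exact (Set.disjoint_left.mp hbip.1 hu hh1).elim
          refine ⟨hnb, fun x hx => ?_⟩
          exact ((adj_slot hn1 j (by rw [h1]; exact hu) (by rw [h2]; exact hnb x hx) hx)).symm
        · rw [h1] at hu
          rw [h2]
          have hnb : ∀ x ∈ G.neighborSet u, x ∈ X := by
            intro x hx
            rcases hbip.2.2 u x hx with ⟨hh1, hh2⟩ | ⟨hh1, hh2⟩
            · exact (Set.disjoint_left.mp hbip.1 hh1 hu).elim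
            · exact hh2
          refine ⟨hnb, fun x hx => ?_⟩
          exact ((adj_slot hn1 j (by rw [h1]; exact hu) (by rw [h2]; exact hnb x hx) hx)).symm
    obtain ⟨hnb, hadjall⟩ := hmain
    -- all those neighbors, placed in column `colOf j'`, must be in S
    have hsub : (fun x => (x, colOf j')) '' (G.neighborSet u) ⊆ S ∩ slot X Y j' := by
      rintro _ ⟨x, hx, rfl⟩
      have hadj : Gt.Adj (x, colOf j') (u, colOf j) := hadjall x hx
      constructor
      · by_contra hxS
        apply hnot
        refine ⟨(x, colOf j'), hxS, ⟨hnb hx, rfl⟩, ?_⟩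
        rcases hR with rfl | rfl
        · exact (hprop _ _ hxS hp hadj).mpr hpR
        · simp only [Not] at hpR ⊢
          intro hr
          exact hpR ((hprop _ _ hxS hp hadj).mp hr)
      · exact ⟨hnb hx, rfl⟩
    have himg : ((fun x => (x, colOf j')) '' (G.neighborSet u)).ncard
        = (G.neighborSet u).ncard := by
      apply Set.ncard_image_of_injective
      intro a b hab
      exact (Prod.ext_iff.mp hab).1
    calc G.minDeg ≤ (G.neighborSet u).ncard := minDeg_le G u
    _ = ((fun x => (x, colOf j')) '' (G.neighborSet u)).ncard := himg.symm
    _ ≤ (S ∩ slot X Y j').ncard := Set.ncard_le_ncard hsub (Set.toFinite _)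
  have hcharged : ∀ j, Charged P Q j → G.minDeg ≤ (S ∩ slot X Y j).ncard := by
    intro j hj
    rcases hj with ⟨hnotP, hPn⟩ | ⟨hnotQ, hQn⟩
    · rcases hPn with h | h
      · exact hblock (j+1) j (Or.inl rfl) id (Or.inl rfl) hnotP h
      · exact hblock (j-1) j (Or.inr (by ring)) id (Or.inl rfl) hnotP h
    · rcases hQn with h | h
      · exact hblock (j+1) j (Or.inl rfl) Not (Or.inr rfl) hnotQ h
      · exact hblock (j-1) j (Or.inr (by ring)) Not (Or.inr rfl) hnotQ h
  -- apply the cycle dichotomy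
  rcases cycle_two_charged (M := 2*n) (by omega) P Q hP hQ with
    ⟨j₁, j₂, hne, hc1, hc2⟩ | hall
  · -- two charged slots: 2δ ≤ |S|
    have h1 := hcharged j₁ hc1
    have h2 := hcharged j₂ hc2
    have hdisj : Disjoint (S ∩ slot X Y j₁) (S ∩ slot X Y j₂) :=
      Disjoint.mono (Set.inter_subset_right) (Set.inter_subset_right)
        (slot_disjoint hn1 hbip.1 hne)
    have hun : (S ∩ slot X Y j₁) ∪ (S ∩ slot X Y j₂) ⊆ S := by
      intro p hp
      rcases hp with hp | hp
      · exact hp.1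
      · exact hp.1
    have := Set.ncard_union_eq hdisj (Set.toFinite _) (Set.toFinite _)
    have hle := Set.ncard_le_ncard hun (Set.toFinite _)
    omega
  · -- every column sees both sides: nκ ≤ |S|
    have hcol : ∀ i : ZMod n, G.vConn ≤ {v : α | (v, i) ∈ S}.ncard := by
      intro i
      obtain ⟨j, hjX, hjY, hcolj, hcolj1⟩ := slot_column hn1 X Y i
      obtain ⟨hPj, hQj⟩ := hall j
      -- a reachable survivor in column i
      have getP : ∀ (p : α × ZMod n), p ∈ slot X Y j ∪ slot X Y (j+1) → p.2 = i := by
        rintro p (hp | hp)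
        · rw [hp.2, hcolj]
        · rw [hp.2, hcolj1]
      obtain ⟨p, hp, hpslot, hpR⟩ : ∃ p, ∃ hp : p ∈ Sᶜ,
          (p ∈ slot X Y j ∪ slot X Y (j+1)) ∧ It.Reachable za ⟨p, hp⟩ := by
        rcases hPj with h | h
        · obtain ⟨p, hp, h1, h2⟩ := h; exact ⟨p, hp, Or.inl h1, h2⟩
        · obtain ⟨p, hp, h1, h2⟩ := h; exact ⟨p, hp, Or.inr h1, h2⟩
      obtain ⟨q, hq, hqslot, hqR⟩ : ∃ q, ∃ hq : q ∈ Sᶜ,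
          (q ∈ slot X Y j ∪ slot X Y (j+1)) ∧ ¬ It.Reachable za ⟨q, hq⟩ := by
        rcases hQj with h | h
        · obtain ⟨q, hq, h1, h2⟩ := h; exact ⟨q, hq, Or.inl h1, h2⟩
        · obtain ⟨q, hq, h1, h2⟩ := h; exact ⟨q, hq, Or.inr h1, h2⟩
      have hpi := getP p hpslot
      have hqi := getP q hqslot
      obtain ⟨u1, i1⟩ := p
      simp only at hpi
      obtain ⟨u2, i2⟩ := q
      simp only at hqi
      have hpi1 : i = i1 := hpi.symm
      subst hpi1
      have hqi2 : i = i2 := hqi.symm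
      subst hqi2
      -- T_i is a vertex cut of G
      set T : Set α := {v : α | (v, i) ∈ S} with hT
      have hcutT : G.IsVertexCut T := by
        intro hconn
        have hreach := hconn.preconnected ⟨u1, hp⟩ ⟨u2, hq⟩
        -- lift to Gt
        have hmaprel : ∀ a b : ↥(Tᶜ), (G.induce Tᶜ).Adj a b →
            It.Adj ⟨((a : α), i), a.2⟩ ⟨((b : α), i), b.2⟩ := by
          intro a b hab
          have hab' : G.Adj a b := hab
          refine hadj_ind _ _ a.2 b.2 ⟨hab', ?_⟩
          rcases hbip.2.2 _ _ hab' with ⟨h1, h2⟩ | ⟨h1, h2⟩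
          · exact Or.inl ⟨h1, h2, Or.inl rfl⟩
          · exact Or.inr ⟨h1, h2, Or.inl rfl⟩
        have hmap := hreach.map
          (⟨fun x => ⟨((x : α), i), x.2⟩, fun {a b} hab => hmaprel a b hab⟩ :
            G.induce Tᶜ →g It)
        exact hqR (hpR.trans hmap)
      have := vConn_mem_le G T (Or.inl hcutT)
      exact this
    -- sum over columns
    haveI : Fintype α := Fintype.ofFinite α
    have hsum : S.ncard = ∑ i : ZMod n, ({v : α | (v, i) ∈ S}).ncard := by
      rw [Set.ncard_eq_toFinset_card' S]
      rw [Finset.card_eq_sum_card_fiberwise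
        (f := fun (p : α × ZMod n) => p.2) (t := Finset.univ) (fun x _ => Finset.mem_univ _)]
      apply Finset.sum_congr rfl
      intro i _
      rw [Set.ncard_eq_toFinset_card' _]
      refine (Finset.card_bij (fun v _ => (v, i)) ?_ ?_ ?_).symm
      · intro v hv
        simp only [Set.mem_toFinset, Set.mem_setOf_eq] at hv
        simp only [Finset.mem_filter, Set.mem_toFinset]
        exact ⟨hv, by trivial⟩
      · intro a ha b hb hab
        exact (Prod.ext_iff.mp hab).1
      · rintro ⟨p1, p2⟩ hp
        simp only [Finset.mem_filter, Set.mem_toFinset] at hp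
        obtain ⟨hp1, hp2⟩ := hp
        refine ⟨p1, ?_, ?_⟩
        · simp only [Set.mem_toFinset, Set.mem_setOf_eq]
          rw [← hp2]
          exact hp1
        · show (p1, i) = (p1, p2)
          rw [hp2]
    have hge : ∑ i : ZMod n, ({v : α | (v, i) ∈ S}).ncard ≥ n * G.vConn := by
      calc ∑ i : ZMod n, ({v : α | (v, i) ∈ S}).ncard
          ≥ ∑ _i : ZMod n, G.vConn := Finset.sum_le_sum (fun i _ => hcol i)
      _ = n * G.vConn := by
        rw [Finset.sum_const, Finset.card_univ, ZMod.card]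
        rfl
    omega

end Lower
section Upper
variable {α : Type u}

lemma ncard_prod_set {n : ℕ} (A : Set α) (B : Set (ZMod n)) :
    (A ×ˢ B).ncard = A.ncard * B.ncard := by
  calc (A ×ˢ B).ncard = Nat.card ↥(A ×ˢ B) := (Nat.card_coe_set_eq _).symm
  _ = Nat.card (↥A × ↥B) := Nat.card_congr (Equiv.Set.prod A B)
  _ = Nat.card ↥A * Nat.card ↥B := Nat.card_prod _ _
  _ = A.ncard * B.ncard := by rw [Nat.card_coe_set_eq, Nat.card_coe_set_eq]

lemma tilde_upper_two_delta [Finite α] {G : SimpleGraph α} {X Y : Set α}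
    (hGc : G.Connected) (hbip : G.IsBipartition X Y) {n : ℕ} (hn : 2 ≤ n) :
    (tildeG G X Y n).vConn ≤ 2 * G.minDeg := by
  classical
  haveI : Nonempty α := hGc.nonempty
  haveI : NeZero n := ⟨by omega⟩
  haveI : Fact (1 < n) := ⟨by omega⟩
  set Gt := tildeG G X Y n with hGt
  obtain ⟨v, hv⟩ := exists_minDeg G
  have hone : (0 : ZMod n) ≠ -1 := by
    intro h
    have h1 : (1 : ZMod n) = 0 := by linear_combination h
    exact one_ne_zero h1
  have hone' : (0 : ZMod n) ≠ 1 := zero_ne_one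
  have hC : ∃ C : Set (ZMod n), C.ncard = 2 ∧
      Gt.neighborSet (v, (0 : ZMod n)) = (G.neighborSet v) ×ˢ C := by
    have hvXY : v ∈ X ∪ Y := by rw [hbip.2.1]; exact Set.mem_univ v
    rcases hvXY with hvX | hvY
    · refine ⟨{0, -1}, Set.ncard_pair hone, ?_⟩
      ext ⟨y, j⟩
      simp only [SimpleGraph.mem_neighborSet, Set.mem_prod, Set.mem_insert_iff,
        Set.mem_singleton_iff]
      constructor
      · rintro ⟨hadj, ⟨_, _, h0⟩ | ⟨hvy, _, _⟩⟩
        · refine ⟨hadj, ?_⟩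
          rcases h0 with h0 | h0
          · exact Or.inl h0.symm
          · right
            linear_combination -h0
        · exact (Set.disjoint_left.mp hbip.1 hvX hvy).elim
      · rintro ⟨hadj, hj⟩
        have hyY : y ∈ Y := by
          rcases hbip.2.2 v y hadj with ⟨h1, h2⟩ | ⟨h1, h2⟩
          · exact h2
          · exact (Set.disjoint_left.mp hbip.1 hvX h1).elim
        refine ⟨hadj, Or.inl ⟨hvX, hyY, ?_⟩⟩
        rcases hj with hj | hj
        · exact Or.inl hj.symm
        · right
          rw [hj]
          ring
    · refine ⟨{0, 1}, Set.ncard_pair hone', ?_⟩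
      ext ⟨x, j⟩
      simp only [SimpleGraph.mem_neighborSet, Set.mem_prod, Set.mem_insert_iff,
        Set.mem_singleton_iff]
      constructor
      · rintro ⟨hadj, ⟨hvx, _, _⟩ | ⟨_, _, h0⟩⟩
        · exact (Set.disjoint_left.mp hbip.1 hvx hvY).elim
        · refine ⟨hadj, ?_⟩
          simpa using h0
      · rintro ⟨hadj, hj⟩
        have hxX : x ∈ X := by
          rcases hbip.2.2 v x hadj with ⟨h1, h2⟩ | ⟨h1, h2⟩
          · exact (Set.disjoint_left.mp hbip.1 h1 hvY).elim
          · exact h2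
        exact ⟨hadj, Or.inr ⟨hvY, hxX, by simpa using hj⟩⟩
  obtain ⟨C, hCcard, hCeq⟩ := hC
  set S := Gt.neighborSet (v, (0 : ZMod n)) with hS
  have hScard : S.ncard = 2 * G.minDeg := by
    rw [hCeq, ncard_prod_set, hCcard, hv, Nat.mul_comm]
  have hw : (v, (0 : ZMod n)) ∈ Sᶜ := fun h => Gt.loopless.irrefl _ h
  have hmem : Gt.IsVertexCut S ∨ Nat.card (α × ZMod n) ≤ S.ncard + 1 := by
    by_cases hex : ∃ p, p ∈ Sᶜ ∧ p ≠ (v, (0 : ZMod n))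
    · left
      intro hconn
      obtain ⟨p, hp, hpne⟩ := hex
      have hreach := hconn.preconnected ⟨(v, (0 : ZMod n)), hw⟩ ⟨p, hp⟩
      have hne : (⟨(v, (0 : ZMod n)), hw⟩ : ↥Sᶜ) ≠ ⟨p, hp⟩ := by
        intro h
        exact hpne (congrArg Subtype.val h).symm
      obtain ⟨⟨q, hq⟩, hadj⟩ := reachable_first_step hreach hne
      exact hq hadj
    · right
      push_neg at hex
      have huniv : (Set.univ : Set (α × ZMod n)) ⊆ S ∪ {(v, (0 : ZMod n))} := by
        intro p _
        by_cases hpS : p ∈ S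
        · exact Or.inl hpS
        · exact Or.inr (hex p hpS)
      calc Nat.card (α × ZMod n) = (Set.univ : Set (α × ZMod n)).ncard :=
            (Set.ncard_univ _).symm
      _ ≤ (S ∪ {(v, (0 : ZMod n))}).ncard := Set.ncard_le_ncard huniv (Set.toFinite _)
      _ ≤ S.ncard + ({(v, (0 : ZMod n))} : Set (α × ZMod n)).ncard := Set.ncard_union_le _ _
      _ = S.ncard + 1 := by rw [Set.ncard_singleton]
  have := vConn_mem_le Gt S hmem
  exact le_of_le_of_eq this hScard

lemma tilde_upper [Finite α] {G : SimpleGraph α} {X Y : Set α}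
    (hGc : G.Connected) (hbip : G.IsBipartition X Y) {n : ℕ} (hn : 2 ≤ n) :
    (tildeG G X Y n).vConn ≤ min (n * G.vConn) (2 * G.minDeg) := by
  classical
  haveI : Nonempty α := hGc.nonempty
  haveI : NeZero n := ⟨by omega⟩
  haveI : Fact (1 < n) := ⟨by omega⟩
  set Gt := tildeG G X Y n with hGt
  have h2d := tilde_upper_two_delta hGc hbip hn
  refine le_min ?_ h2d
  by_cases hm : 2 ≤ Nat.card α
  case neg =>
    -- single vertex: G̃ has no edges and at least 2 vertices
    have hm1 : Nat.card α = 1 := by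
      have := Nat.card_pos (α := α)
      omega
    haveI hsub : Subsingleton α := by
      rw [Nat.card_eq_one_iff_unique] at hm1
      exact hm1.1
    have hnoadj : ∀ a b : α × ZMod n, ¬ Gt.Adj a b := by
      intro a b h
      exact (G.ne_of_adj h.1) (Subsingleton.elim _ _)
    obtain ⟨v0⟩ := ‹Nonempty α›
    have hcut : Gt.IsVertexCut (∅ : Set (α × ZMod n)) := by
      intro hconn
      have h0 : ((v0, (0 : ZMod n)) : α × ZMod n) ∈ (∅ : Set (α × ZMod n))ᶜ := by simp
      have h1 : ((v0, (1 : ZMod n)) : α × ZMod n) ∈ (∅ : Set (α × ZMod n))ᶜ := by simp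
      have hre := hconn.preconnected ⟨_, h0⟩ ⟨_, h1⟩
      have heq := reachable_eq_of_no_adj
        (G := Gt.induce (∅ : Set (α × ZMod n))ᶜ) (fun a b h => hnoadj _ _ h) hre
      have := congrArg (fun q => (Subtype.val q).2) heq
      simp only at this
      exact zero_ne_one this
    have := vConn_mem_le Gt ∅ (Or.inl hcut)
    simp only [Set.ncard_empty] at this
    exact le_trans this (Nat.zero_le _)
  case pos =>
    obtain ⟨S₀, hS₀card, hS₀mem⟩ := exists_vConn_witness G
    rcases hS₀mem with hS₀cut | hS₀card'
    · -- product cut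
      set S : Set (α × ZMod n) := S₀ ×ˢ (Set.univ : Set (ZMod n)) with hSdef
      have hScard : S.ncard = G.vConn * n := by
        rw [hSdef, ncard_prod_set, hS₀card, Set.ncard_univ, Nat.card_eq_fintype_card,
          ZMod.card]
      have hcut : Gt.IsVertexCut S := by
        intro hconn
        by_cases hS0c : (S₀ᶜ : Set α).Nonempty
        · obtain ⟨za, zb, hzr⟩ : ∃ a b : ↥(S₀ᶜ), ¬ (G.induce S₀ᶜ).Reachable a b := by
            by_contra h
            push_neg at h
            haveI : Nonempty ↥(S₀ᶜ) := Set.nonempty_coe_sort.mpr hS0c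
            exact hS₀cut ⟨fun a b => h a b⟩
          have hza : ((za : α), (0 : ZMod n)) ∈ Sᶜ := fun hmem => za.2 hmem.1
          have hzb : ((zb : α), (0 : ZMod n)) ∈ Sᶜ := fun hmem => zb.2 hmem.1
          have hreach := hconn.preconnected ⟨_, hza⟩ ⟨_, hzb⟩
          have hmap := hreach.map
            (⟨fun p => ⟨p.1.1, fun h0 => p.2 ⟨h0, Set.mem_univ _⟩⟩,
              fun {a b} hab => hab.1⟩ : Gt.induce Sᶜ →g G.induce S₀ᶜ)
          exact hzr hmap
        · obtain ⟨p, hp⟩ := hconn.nonempty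
          exact hS0c ⟨p.1, fun h0 => hp ⟨h0, Set.mem_univ _⟩⟩
      have := vConn_mem_le Gt S (Or.inl hcut)
      rw [hScard] at this
      rw [Nat.mul_comm n G.vConn]
      exact this
    · -- vConn G = |α| - 1
      have hle := vConn_le_pred G
      have hkm : G.vConn + 1 = Nat.card α := by omega
      obtain ⟨hXne, hYne, hdX, hdY⟩ := bip_facts hGc hbip hm
      have hmcard : Nat.card α = X.ncard + Y.ncard := by
        rw [← Set.ncard_univ, ← hbip.2.1]
        exact (Set.ncard_union_eq hbip.1 (Set.toFinite _) (Set.toFinite _))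
      have hYpos : 1 ≤ Y.ncard := by
        have := Set.ncard_pos (Set.toFinite Y) |>.mpr hYne
        omega
      have hdk : G.minDeg ≤ G.vConn := by omega
      have h2k : 2 * G.minDeg ≤ n * G.vConn := by
        calc 2 * G.minDeg ≤ 2 * G.vConn := by omega
        _ ≤ n * G.vConn := Nat.mul_le_mul_right _ hn
      exact le_trans h2d h2k

/-- κ(G̃ₙ) = min{n·κ(G), 2·δ(G)} for a connected bipartite graph G and n ≥ 2. -/
theorem stmt_5 (G : SimpleGraph α) (X Y : Set α)
    (hGc : G.Connected) (hbip : G.IsBipartition X Y) (n : ℕ) (hn : 2 ≤ n) :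
    (tildeG G X Y n).vConn = min (n * G.vConn) (2 * G.minDeg) := by
  classical
  haveI : Nonempty α := hGc.nonempty
  haveI : NeZero n := ⟨by omega⟩
  by_cases hfin : Finite α
  · refine le_antisymm (tilde_upper hGc hbip hn) ?_
    obtain ⟨S₀, hcard, hmem⟩ := exists_vConn_witness (tildeG G X Y n)
    rcases hmem with hcut | hbig
    · rw [← hcard]
      exact tilde_lower_bound hGc hbip hn S₀ hcut
    · have h1 := vConn_le_pred G
      have h2 : n * G.vConn + n ≤ n * Nat.card α := by
        have h3 := Nat.mul_le_mul_left n h1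
        rwa [Nat.mul_add, Nat.mul_one] at h3
      have hbig' : n * Nat.card α ≤ (tildeG G X Y n).vConn + 1 := by
        have hprod : Nat.card (α × ZMod n) = Nat.card α * n := by
          rw [Nat.card_prod]
          congr 1
          rw [Nat.card_eq_fintype_card, ZMod.card]
        rw [hprod, Nat.mul_comm] at hbig
        exact hbig
      refine le_trans (min_le_left _ _) ?_
      omega
  · haveI : Infinite α := not_finite_iff_infinite.mp hfin
    have h1 : G.vConn = 0 := by
      have := vConn_mem_le G ∅ (Or.inr (by simp [Nat.card_eq_zero_of_infinite]))
      simpa using this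
    have h2 : (tildeG G X Y n).vConn = 0 := by
      haveI : Infinite (α × ZMod n) := by infer_instance
      have := vConn_mem_le (tildeG G X Y n) ∅
        (Or.inr (by simp [Nat.card_eq_zero_of_infinite]))
      simpa using this
    rw [h1, h2, Nat.mul_zero]
    simp
end Upper
end

section
/- Let G be a connected bipartite graph with bipartition (X,Y) and n ≥ 3 an integer. If |X| ≥ δ(G)+1, |Y| ≥ δ(G)+1, and κ(G) > (2/n)·δ(G), then the graph G̃_n is super connected. -/
open SimpleGraph

universe u v

variable {α : Type u} {β : Type v}

open scoped Classical

/- ======================= auxiliary development ======================= -/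

/-- A graph with an isolated vertex and another vertex is not connected. -/
lemma aux_isolated_not_connected (H : SimpleGraph β) (a b : β) (hab : a ≠ b)
    (ha : ∀ x, ¬ H.Adj a x) : ¬ H.Connected := by
  intro h
  obtain ⟨w⟩ := h.preconnected a b
  cases w with
  | nil => exact hab rfl
  | cons h' _ => exact ha _ h'

lemma aux_vConn_le_of_cut {H : SimpleGraph β} {S : Set β} (h : H.IsVertexCut S) :
    H.vConn ≤ S.ncard :=
  Nat.sInf_le ⟨S, rfl, Or.inl h⟩

lemma aux_connected_of_lt_vConn {H : SimpleGraph β} {T : Set β}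
    (h : T.ncard < H.vConn) : (H.induce Tᶜ).Connected := by
  by_contra hc
  exact absurd (aux_vConn_le_of_cut hc) (by omega)

lemma aux_minDeg_le {H : SimpleGraph β} (v : β) :
    H.minDeg ≤ (H.neighborSet v).ncard :=
  Nat.sInf_le ⟨v, rfl⟩

lemma aux_minDeg_attained {H : SimpleGraph β} [Nonempty β] :
    ∃ v, (H.neighborSet v).ncard = H.minDeg := by
  have : H.minDeg ∈ {d | ∃ v, (H.neighborSet v).ncard = d} :=
    Nat.sInf_mem ⟨(H.neighborSet (Classical.arbitrary β)).ncard, ⟨_, rfl⟩⟩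
  exact this

/-- From a connected graph, a vertex distinct from another has a neighbor. -/
lemma aux_exists_adj {H : SimpleGraph β} (hc : H.Connected) {a b : β} (hab : a ≠ b) :
    ∃ x, H.Adj a x := by
  by_contra h
  push_neg at h
  exact aux_isolated_not_connected H a b hab h hc
section TGInfra

variable {α : Type u}

/-- class index of a vertex of `G̃ₙ` in `ZMod (2n)`. -/
noncomputable def tgcls (Y : Set α) (n : ℕ) (a : α × ZMod n) : ZMod (2*n) :=
  ((2 * a.2.val + (if a.1 ∈ Y then 1 else 0) : ℕ) : ZMod (2*n))

/-- the class with index `c`. -/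
noncomputable def tgC (Y : Set α) (n : ℕ) (c : ZMod (2*n)) : Set (α × ZMod n) :=
  {a | tgcls Y n a = c}

noncomputable def tgidx (n : ℕ) (c : ZMod (2*n)) : ZMod n := ((c.val / 2 : ℕ) : ZMod n)

/-- embedding of `α` onto the block `(tgC c, tgC (c+1))`. -/
noncomputable def tgphi (Y : Set α) (n : ℕ) (c : ZMod (2*n)) (v : α) : α × ZMod n :=
  (v, if v ∈ Y then tgidx n c else
    (if c.val % 2 = 1 then tgidx n c + 1 else tgidx n c))

variable {Y : Set α} {n : ℕ}

lemma tgphi_fst (c : ZMod (2*n)) (v : α) : (tgphi Y n c v).1 = v := rfl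

lemma tgphi_inj (c : ZMod (2*n)) : Function.Injective (tgphi Y n c) :=
  fun _ _ h => congrArg Prod.fst h

lemma tgcls_val (hn : 3 ≤ n) (a : α × ZMod n) :
    (tgcls Y n a).val = 2 * a.2.val + (if a.1 ∈ Y then 1 else 0) := by
  haveI : NeZero n := ⟨by omega⟩
  have h2 : a.2.val < n := a.2.val_lt
  apply ZMod.val_cast_of_lt
  split_ifs <;> omega

lemma tgcls_cast_self (hn : 3 ≤ n) (c : ZMod (2*n)) :
    ((c.val : ℕ) : ZMod (2*n)) = c := by
  haveI : NeZero (2*n) := ⟨by omega⟩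
  exact ZMod.natCast_rightInverse c

/-- `2 * (x % n)` and `2 * x` agree mod `2n`. -/
lemma tg_cast2mod (hn : 3 ≤ n) (x : ℕ) :
    ((2 * (x % n) : ℕ) : ZMod (2*n)) = ((2 * x : ℕ) : ZMod (2*n)) := by
  have h : (2 * x : ℕ) = (2*n) * (x / n) + 2 * (x % n) := by
    conv_lhs => rw [← Nat.div_add_mod x n]
    ring
  have h0 : ((2*n*(x/n) : ℕ) : ZMod (2*n)) = 0 :=
    (ZMod.natCast_eq_zero_iff _ _).mpr (Dvd.intro _ rfl)
  rw [h, Nat.cast_add, h0, zero_add]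

lemma tgidx_val (hn : 3 ≤ n) (c : ZMod (2*n)) : (tgidx n c).val = c.val / 2 := by
  haveI : NeZero n := ⟨by omega⟩
  haveI : NeZero (2*n) := ⟨by omega⟩
  have : c.val < 2*n := c.val_lt
  exact ZMod.val_cast_of_lt (by omega)

lemma tgcls_tgphi_not_mem (hn : 3 ≤ n) (c : ZMod (2*n)) {v : α} (hv : v ∉ Y) :
    tgcls Y n (tgphi Y n c v) = (if c.val % 2 = 1 then c + 1 else c) := by
  haveI : NeZero n := ⟨by omega⟩
  haveI : NeZero (2*n) := ⟨by omega⟩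
  have hc : c.val < 2*n := c.val_lt
  unfold tgcls tgphi
  simp only [hv, if_false, if_neg]
  split_ifs with hpar
  · -- c odd : second coordinate is idx c + 1
    have h1 : (tgidx n c + 1).val = (c.val / 2 + 1) % n := by
      haveI : Fact (1 < n) := ⟨by omega⟩
      rw [ZMod.val_add, tgidx_val hn, ZMod.val_one]
    rw [h1]
    have h2 : ((2 * ((c.val / 2 + 1) % n) + 0 : ℕ) : ZMod (2*n))
        = ((2 * (c.val / 2 + 1) : ℕ) : ZMod (2*n)) := by
      rw [Nat.add_zero]; exact tg_cast2mod hn _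
    rw [h2]
    have h3 : 2 * (c.val / 2 + 1) = c.val + 1 := by omega
    rw [h3]
    push_cast
    rw [tgcls_cast_self hn]
  · have h1 : 2 * (tgidx n c).val + 0 = c.val := by
      rw [tgidx_val hn]; omega
    rw [h1, tgcls_cast_self hn]

lemma tgcls_tgphi_mem (hn : 3 ≤ n) (c : ZMod (2*n)) {v : α} (hv : v ∈ Y) :
    tgcls Y n (tgphi Y n c v) = (if c.val % 2 = 1 then c else c + 1) := by
  haveI : NeZero n := ⟨by omega⟩
  haveI : NeZero (2*n) := ⟨by omega⟩
  have hc : c.val < 2*n := c.val_lt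
  unfold tgcls tgphi
  simp only [hv, if_true]
  split_ifs with hpar
  · have h1 : 2 * (tgidx n c).val + 1 = c.val := by rw [tgidx_val hn]; omega
    rw [h1, tgcls_cast_self hn]
  · have h1 : 2 * (tgidx n c).val + 1 = c.val + 1 := by rw [tgidx_val hn]; omega
    rw [h1]
    push_cast
    rw [tgcls_cast_self hn]
end TGInfra
section TGInfra2

variable {α : Type u} {G : SimpleGraph α} {X Y : Set α} {n : ℕ}

lemma tildeG_adj_iff {a b : α × ZMod n} :
    (tildeG G X Y n).Adj a b ↔ (G.Adj a.1 b.1 ∧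
    ((a.1 ∈ X ∧ b.1 ∈ Y ∧ (a.2 = b.2 ∨ a.2 = b.2 + 1)) ∨
     (a.1 ∈ Y ∧ b.1 ∈ X ∧ (b.2 = a.2 ∨ b.2 = a.2 + 1)))) := Iff.rfl

lemma bip_side (hbip : G.IsBipartition X Y) (v : α) : v ∈ X ↔ v ∉ Y := by
  constructor
  · exact fun h hy => Set.disjoint_left.mp hbip.1 h hy
  · intro h
    have hv : v ∈ X ∪ Y := hbip.2.1.symm ▸ Set.mem_univ v
    rcases hv with h' | h'
    · exact h'
    · exact absurd h' h

lemma bip_opp (hbip : G.IsBipartition X Y) {u v : α} (h : G.Adj u v) :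
    (v ∈ Y ↔ u ∉ Y) := by
  rcases hbip.2.2 u v h with ⟨hu, hv⟩ | ⟨hu, hv⟩
  · exact ⟨fun _ => (bip_side hbip u).mp hu, fun _ => hv⟩
  · constructor
    · intro hv'; exact absurd ((bip_side hbip v).mp hv) (fun f => f hv')
    · intro hu'; exact absurd hu hu'

lemma mem_tgC_iff {a : α × ZMod n} {c : ZMod (2*n)} :
    a ∈ tgC Y n c ↔ tgcls Y n a = c := Iff.rfl

lemma tgC_parity (hn : 3 ≤ n) {a : α × ZMod n} {c : ZMod (2*n)}
    (ha : a ∈ tgC Y n c) : (a.1 ∈ Y ↔ c.val % 2 = 1) := by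
  have hv := tgcls_val (Y := Y) hn a
  rw [mem_tgC_iff] at ha
  rw [ha] at hv
  split_ifs at hv with h
  · simp [h]; omega
  · simp [h]; omega

lemma tg_val_succ (hn : 3 ≤ n) (c : ZMod (2*n)) :
    (c + 1).val = (c.val + 1) % (2*n) := by
  haveI : Fact (1 < 2*n) := ⟨by omega⟩
  rw [ZMod.val_add, ZMod.val_one]

lemma tg_parity_succ (hn : 3 ≤ n) (c : ZMod (2*n)) :
    (c + 1).val % 2 ≠ c.val % 2 := by
  haveI : NeZero (2*n) := ⟨by omega⟩
  have h1 := tg_val_succ hn c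
  have h2 : c.val < 2*n := c.val_lt
  have hev : (2*n) % 2 = 0 := by omega
  rcases Nat.lt_or_ge c.val (2*n-1) with h | h
  · rw [h1, Nat.mod_eq_of_lt (show c.val + 1 < 2*n by omega)]; omega
  · have : c.val = 2*n-1 := by omega
    rw [h1, this]
    have : (2*n-1+1) = 2*n := by omega
    rw [this, Nat.mod_self]
    omega

lemma tg_natCast_val (hn : 3 ≤ n) (i : ZMod n) : ((i.val : ℕ) : ZMod n) = i := by
  haveI : NeZero n := ⟨by omega⟩
  exact ZMod.natCast_rightInverse i

lemma tgphi_eq_self_left (hn : 3 ≤ n) {a : α × ZMod n} {c : ZMod (2*n)}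
    (ha : a ∈ tgC Y n c) : tgphi Y n c a.1 = a := by
  haveI : NeZero n := ⟨by omega⟩
  have hv := tgcls_val (Y := Y) hn a
  rw [mem_tgC_iff] at ha
  rw [ha] at hv
  unfold tgphi
  by_cases hY : a.1 ∈ Y
  · simp only [hY, if_true]
    have : (tgidx n c) = a.2 := by
      rw [tgidx, show c.val / 2 = a.2.val by first | (rw [if_pos hY] at hv; omega) | (rw [if_neg hY] at hv; omega), tg_natCast_val hn]
    rw [this]
  · simp only [hY, if_false]
    have hpar : ¬ (c.val % 2 = 1) := by first | (rw [if_pos hY] at hv; omega) | (rw [if_neg hY] at hv; omega)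
    simp only [hpar, if_false]
    have : (tgidx n c) = a.2 := by
      rw [tgidx, show c.val / 2 = a.2.val by first | (rw [if_pos hY] at hv; omega) | (rw [if_neg hY] at hv; omega), tg_natCast_val hn]
    rw [this]

lemma tgphi_eq_self_right (hn : 3 ≤ n) {a : α × ZMod n} {c : ZMod (2*n)}
    (ha : a ∈ tgC Y n (c+1)) : tgphi Y n c a.1 = a := by
  haveI : NeZero n := ⟨by omega⟩
  haveI : NeZero (2*n) := ⟨by omega⟩
  have hv := tgcls_val (Y := Y) hn a
  rw [mem_tgC_iff] at ha
  rw [ha, tg_val_succ hn c] at hv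
  have hlt : c.val < 2*n := c.val_lt
  unfold tgphi
  rcases Nat.lt_or_ge c.val (2*n-1) with hc | hc
  · rw [Nat.mod_eq_of_lt (by omega)] at hv
    by_cases hY : a.1 ∈ Y
    · simp only [hY, if_true]
      have : (tgidx n c) = a.2 := by
        rw [tgidx, show c.val / 2 = a.2.val by first | (rw [if_pos hY] at hv; omega) | (rw [if_neg hY] at hv; omega), tg_natCast_val hn]
      rw [this]
    · simp only [hY, if_false]
      have h0 : a.2.val ≥ 1 ∧ c.val + 1 = 2 * a.2.val := by first | (rw [if_pos hY] at hv; omega) | (rw [if_neg hY] at hv; omega)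
      have hpar : c.val % 2 = 1 := by omega
      simp only [hpar, if_true]
      have : (tgidx n c) + 1 = a.2 := by
        rw [tgidx, show c.val / 2 = a.2.val - 1 by omega]
        rw [show ((a.2.val - 1 : ℕ) : ZMod n) + 1 = ((a.2.val - 1 + 1 : ℕ) : ZMod n) by push_cast; ring]
        rw [show a.2.val - 1 + 1 = a.2.val by omega, tg_natCast_val hn]
      rw [this]
  · have hc' : c.val = 2*n-1 := by omega
    rw [hc', show (2*n-1+1) = 2*n by omega, Nat.mod_self] at hv
    have hY : a.1 ∉ Y := by
      intro h; rw [if_pos h] at hv; omega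
    have h2 : a.2.val = 0 := by rw [if_neg hY] at hv; omega
    simp only [hY, if_false]
    have hpar : c.val % 2 = 1 := by omega
    simp only [hpar, if_true]
    have : (tgidx n c) + 1 = a.2 := by
      rw [tgidx, hc', show (2*n-1)/2 = n-1 by omega]
      rw [show ((n - 1 : ℕ) : ZMod n) + 1 = ((n - 1 + 1 : ℕ) : ZMod n) by push_cast; ring]
      rw [show n - 1 + 1 = n by omega, ZMod.natCast_self]
      rw [show a.2 = ((a.2.val : ℕ) : ZMod n) from (tg_natCast_val hn a.2).symm, h2]
      simp
    rw [this]

lemma tgphi_opp_succ (hn : 3 ≤ n) (hbip : G.IsBipartition X Y)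
    {a : α × ZMod n} {c : ZMod (2*n)} {u : α}
    (ha : a ∈ tgC Y n c) (hadj : G.Adj a.1 u) : tgphi Y n c u ∈ tgC Y n (c+1) := by
  have hpar := tgC_parity hn ha
  have hopp := bip_opp hbip hadj
  rw [mem_tgC_iff]
  by_cases hu : u ∈ Y
  · rw [tgcls_tgphi_mem hn c hu]
    have : ¬ (c.val % 2 = 1) := fun h => (hopp.mp hu) (hpar.mpr h)
    simp [this]
  · rw [tgcls_tgphi_not_mem hn c hu]
    have ha1 : a.1 ∈ Y := by by_contra h; exact hu (hopp.mpr h)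
    have : c.val % 2 = 1 := hpar.mp ha1
    simp [this]

lemma tgphi_opp_pred (hn : 3 ≤ n) (hbip : G.IsBipartition X Y)
    {a : α × ZMod n} {c : ZMod (2*n)} {u : α}
    (ha : a ∈ tgC Y n (c+1)) (hadj : G.Adj a.1 u) : tgphi Y n c u ∈ tgC Y n c := by
  have hpar := tgC_parity hn ha
  have hopp := bip_opp hbip hadj
  have hps := tg_parity_succ hn c
  have hb : (c+1).val % 2 = 0 ∨ (c+1).val % 2 = 1 := by omega
  rw [mem_tgC_iff]
  by_cases hu : u ∈ Y
  · rw [tgcls_tgphi_mem hn c hu]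
    have ha1 : a.1 ∉ Y := hopp.mp hu
    have : ¬((c+1).val % 2 = 1) := fun h => ha1 (hpar.mpr h)
    have : c.val % 2 = 1 := by omega
    simp [this]
  · rw [tgcls_tgphi_not_mem hn c hu]
    have ha1 : a.1 ∈ Y := by
      by_contra h
      exact hu (hopp.mpr h)
    have h1 : (c+1).val % 2 = 1 := hpar.mp ha1
    have : ¬ (c.val % 2 = 1) := by omega
    simp [this]

end TGInfra2
section TGInfra3

variable {α : Type u} {G : SimpleGraph α} {X Y : Set α} {n : ℕ}

lemma tgphi_adj (hn : 3 ≤ n) (hbip : G.IsBipartition X Y) {u v : α}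
    (h : G.Adj u v) (c : ZMod (2*n)) :
    (tildeG G X Y n).Adj (tgphi Y n c u) (tgphi Y n c v) := by
  rw [tildeG_adj_iff]
  refine ⟨h, ?_⟩
  rcases hbip.2.2 u v h with ⟨hu, hv⟩ | ⟨hu, hv⟩
  · left
    have hu' : u ∉ Y := (bip_side hbip u).mp hu
    refine ⟨hu, hv, ?_⟩
    unfold tgphi
    simp only [hu', hv, if_true, if_false]
    split_ifs with hp
    · right; rfl
    · left; rfl
  · right
    have hv' : v ∉ Y := (bip_side hbip v).mp hv
    refine ⟨hu, hv, ?_⟩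
    unfold tgphi
    simp only [hu, hv', if_true, if_false]
    split_ifs with hp
    · right; rfl
    · left; rfl

lemma tgphi_mem_union (hn : 3 ≤ n) (hbip : G.IsBipartition X Y) (c : ZMod (2*n)) (v : α) :
    tgphi Y n c v ∈ tgC Y n c ∪ tgC Y n (c+1) := by
  by_cases hv : v ∈ Y
  · rw [Set.mem_union, mem_tgC_iff, mem_tgC_iff, tgcls_tgphi_mem hn c hv]
    split_ifs
    · left; rfl
    · right; rfl
  · rw [Set.mem_union, mem_tgC_iff, mem_tgC_iff, tgcls_tgphi_not_mem hn c hv]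
    split_ifs
    · right; rfl
    · left; rfl

lemma tgC_eq_image (hn : 3 ≤ n) (hbip : G.IsBipartition X Y) (c : ZMod (2*n)) :
    tgC Y n c = tgphi Y n c '' (if c.val % 2 = 1 then Y else X) := by
  ext a
  constructor
  · intro ha
    refine ⟨a.1, ?_, tgphi_eq_self_left hn ha⟩
    have := tgC_parity hn ha
    split_ifs with hp
    · exact this.mpr hp
    · exact (bip_side hbip a.1).mpr (fun h => hp (this.mp h))
  · rintro ⟨v, hv, rfl⟩
    rw [mem_tgC_iff]
    split_ifs at hv with hp
    · rw [tgcls_tgphi_mem hn c hv, if_pos hp]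
    · have hv' : v ∉ Y := (bip_side hbip v).mp hv
      rw [tgcls_tgphi_not_mem hn c hv', if_neg hp]

lemma tgC_ncard (hn : 3 ≤ n) (hbip : G.IsBipartition X Y) (c : ZMod (2*n)) :
    (tgC Y n c).ncard = (if c.val % 2 = 1 then Y.ncard else X.ncard) := by
  rw [tgC_eq_image hn hbip c]
  split_ifs
  · exact Set.ncard_image_of_injective _ (tgphi_inj c)
  · exact Set.ncard_image_of_injective _ (tgphi_inj c)

lemma tg_adj_cls (hn : 3 ≤ n) (hbip : G.IsBipartition X Y) {a b : α × ZMod n}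
    (h : (tildeG G X Y n).Adj a b) :
    tgcls Y n b = tgcls Y n a + 1 ∨ tgcls Y n a = tgcls Y n b + 1 := by
  haveI : NeZero n := ⟨by omega⟩
  haveI : Fact (1 < n) := ⟨by omega⟩
  rw [tildeG_adj_iff] at h
  obtain ⟨-, hc⟩ := h
  rcases hc with ⟨haX, hbY, h2⟩ | ⟨haY, hbX, h2⟩
  · have ha' : a.1 ∉ Y := (bip_side hbip a.1).mp haX
    unfold tgcls
    simp only [ha', hbY, if_true, if_false]
    rcases h2 with h2 | h2
    · left
      rw [h2]
      push_cast
      ring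
    · right
      rw [h2, ZMod.val_add, ZMod.val_one]
      rw [show (2 * ((b.2.val + 1) % n) + 0 : ℕ) = (2 * ((b.2.val + 1) % n) : ℕ) by omega]
      rw [tg_cast2mod hn]
      rw [show (2 * (b.2.val + 1) : ℕ) = (2 * b.2.val + 1) + 1 by ring]
      push_cast
      ring
  · have hb' : b.1 ∉ Y := (bip_side hbip b.1).mp hbX
    unfold tgcls
    simp only [haY, hb', if_true, if_false]
    rcases h2 with h2 | h2
    · right
      rw [h2]
      push_cast
      ring
    · left
      rw [h2, ZMod.val_add, ZMod.val_one]
      rw [show (2 * ((a.2.val + 1) % n) + 0 : ℕ) = (2 * ((a.2.val + 1) % n) : ℕ) by omega]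
      rw [tg_cast2mod hn]
      rw [show (2 * (a.2.val + 1) : ℕ) = (2 * a.2.val + 1) + 1 by ring]
      push_cast
      ring

/-- the exact neighbourhood of a vertex in `G̃ₙ`. -/
lemma tg_nbhd_eq (hn : 3 ≤ n) (hbip : G.IsBipartition X Y) (a : α × ZMod n) :
    (tildeG G X Y n).neighborSet a =
      tgphi Y n (tgcls Y n a) '' G.neighborSet a.1 ∪
      tgphi Y n (tgcls Y n a - 1) '' G.neighborSet a.1 := by
  haveI : NeZero n := ⟨by omega⟩
  set c := tgcls Y n a with hc
  have hac : a ∈ tgC Y n c := rfl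
  have hac' : a ∈ tgC Y n ((c-1)+1) := by rw [sub_add_cancel]; exact rfl
  ext b
  simp only [SimpleGraph.mem_neighborSet, Set.mem_union, Set.mem_image]
  constructor
  · intro hadj
    have hGadj : G.Adj a.1 b.1 := hadj.1
    have hbc := tg_adj_cls hn hbip hadj
    rcases hbc with hbc | hbc
    · -- b is in class c + 1
      left
      refine ⟨b.1, hGadj, ?_⟩
      have hb : b ∈ tgC Y n (c + 1) := by rw [mem_tgC_iff, hbc]
      have h1 : tgphi Y n c b.1 ∈ tgC Y n (c+1) := tgphi_opp_succ hn hbip hac hGadj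
      -- both b and tgphi c b.1 lie in tgC (c+1) with the same first coordinate
      have := tgphi_eq_self_right hn hb
      exact this
    · -- b is in class c - 1
      right
      refine ⟨b.1, hGadj, ?_⟩
      have hb : b ∈ tgC Y n (c-1) := by
        rw [mem_tgC_iff, hc, hbc]
        ring
      exact tgphi_eq_self_left hn hb
  · rintro (⟨v, hv, rfl⟩ | ⟨v, hv, rfl⟩)
    · have h2 : tgphi Y n c a.1 = a := tgphi_eq_self_left hn hac
      have := tgphi_adj hn hbip ((SimpleGraph.mem_neighborSet _ _ _).mp hv) c
      rw [h2] at this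
      exact this
    · have h2 : tgphi Y n (c-1) a.1 = a := tgphi_eq_self_right hn hac'
      have := tgphi_adj hn hbip ((SimpleGraph.mem_neighborSet _ _ _).mp hv) (c-1)
      rw [h2] at this
      exact this

end TGInfra3
section TGInfra4

variable {α : Type u} {G : SimpleGraph α} {X Y : Set α} {n : ℕ}

lemma tgphi_eq_self (hn : 3 ≤ n) {a : α × ZMod n} {c : ZMod (2*n)}
    (ha : a ∈ tgC Y n c ∪ tgC Y n (c+1)) : tgphi Y n c a.1 = a := by
  rcases ha with ha | ha
  · exact tgphi_eq_self_left hn ha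
  · exact tgphi_eq_self_right hn ha

/-- Basic consequences of the hypotheses on `G`. -/
lemma G_basics (hGc : G.Connected) (hbip : G.IsBipartition X Y)
    (hX : G.minDeg + 1 ≤ X.ncard) (hY : G.minDeg + 1 ≤ Y.ncard)
    {n : ℕ} (hk : 2 * G.minDeg < n * G.vConn) :
    Finite α ∧ 1 ≤ G.vConn ∧ G.vConn ≤ G.minDeg ∧ 1 ≤ G.minDeg ∧
      2 * G.minDeg + 2 ≤ Nat.card α := by
  have hκ1 : 1 ≤ G.vConn := by
    by_contra h
    push_neg at h
    interval_cases h' : G.vConn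
    · simp [h'] at hk
  -- card α ≥ 2
  have hcard2 : 2 ≤ Nat.card α := by
    by_contra h
    push_neg at h
    have h0 : (0 : ℕ) ∈ {m | ∃ S : Set α, S.ncard = m ∧
        (G.IsVertexCut S ∨ Nat.card α ≤ m + 1)} :=
      ⟨∅, Set.ncard_empty _, Or.inr (by omega)⟩
    have := Nat.sInf_le h0
    rw [show sInf {m | ∃ S : Set α, S.ncard = m ∧
        (G.IsVertexCut S ∨ Nat.card α ≤ m + 1)} = G.vConn from rfl] at this
    omega
  have hfin : Finite α := by
    have : 0 < Nat.card α := by omega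
    exact (Nat.card_pos_iff.mp this).2
  have hne : Nonempty α := by
    have : 0 < Nat.card α := by omega
    exact (Nat.card_pos_iff.mp this).1
  have hnontriv : Nontrivial α := by
    have : Finite α := hfin
    exact Finite.one_lt_card_iff_nontrivial.mp (by omega)
  -- minimum degree at least 1
  obtain ⟨x₀, hx₀⟩ := aux_minDeg_attained (H := G)
  have hδ1 : 1 ≤ G.minDeg := by
    by_contra h
    push_neg at h
    have h0 : (G.neighborSet x₀).ncard = 0 := by omega
    have hempty : G.neighborSet x₀ = ∅ := by
      have := Set.toFinite (G.neighborSet x₀)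
      exact (Set.ncard_eq_zero this).mp h0
    obtain ⟨b, hb⟩ := exists_ne x₀
    obtain ⟨x, hx⟩ := aux_exists_adj hGc hb.symm
    have : x ∈ G.neighborSet x₀ := hx
    rw [hempty] at this
    exact this
  -- card α = |X| + |Y| ≥ 2δ+2
  have hcard : Nat.card α = X.ncard + Y.ncard := by
    rw [← Set.ncard_univ, ← hbip.2.1, Set.ncard_union_eq hbip.1]
  have hbig : 2 * G.minDeg + 2 ≤ Nat.card α := by omega
  -- vertex connectivity at most minimum degree
  have hκδ : G.vConn ≤ G.minDeg := by
    have hTsub : ¬ ((G.neighborSet x₀ ∪ {x₀})ᶜ = ∅) := by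
      intro h
      have : (G.neighborSet x₀ ∪ {x₀}) = Set.univ := by
        rw [← Set.compl_empty_iff]; exact h
      have h1 : Nat.card α ≤ G.minDeg + 1 := by
        calc Nat.card α = (Set.univ : Set α).ncard := (Set.ncard_univ α).symm
        _ = (G.neighborSet x₀ ∪ {x₀}).ncard := by rw [this]
        _ ≤ (G.neighborSet x₀).ncard + ({x₀} : Set α).ncard := Set.ncard_union_le _ _
        _ = G.minDeg + 1 := by rw [hx₀, Set.ncard_singleton]
      omega
    obtain ⟨b, hbmem⟩ := Set.nonempty_iff_ne_empty.mpr hTsub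
    have hbx : b ≠ x₀ := by
      intro h; exact hbmem (Or.inr (by simp [h]))
    have hbT : b ∈ (G.neighborSet x₀)ᶜ := fun h => hbmem (Or.inl h)
    have hx₀T : x₀ ∈ (G.neighborSet x₀)ᶜ := by
      simp [SimpleGraph.mem_neighborSet]
    have hcut : G.IsVertexCut (G.neighborSet x₀) := by
      apply aux_isolated_not_connected _ (⟨x₀, hx₀T⟩ : ↥(G.neighborSet x₀)ᶜ) ⟨b, hbT⟩
      · intro h
        exact hbx (congrArg Subtype.val h).symm
      · rintro ⟨x, hxc⟩ hadj
        exact hxc hadj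
    have := aux_vConn_le_of_cut hcut
    omega
  exact ⟨hfin, hκ1, hκδ, hδ1, hbig⟩

variable [Finite α] [NeZero n] [NeZero (2*n)]

/-- number of removed vertices in class `c`. -/
noncomputable def tgs (S : Set (α × ZMod n)) (c : ZMod (2*n)) : ℕ := (S ∩ tgC Y n c).ncard

lemma tgs_sum (hn : 3 ≤ n) (S : Set (α × ZMod n)) :
    ∑ c : ZMod (2*n), tgs (Y := Y) S c = S.ncard := by
  classical
  have hS : S.Finite := Set.toFinite S
  have h1 : hS.toFinset.card = ∑ c : ZMod (2*n),
      (hS.toFinset.filter (fun a => tgcls Y n a = c)).card :=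
    Finset.card_eq_sum_card_fiberwise (fun x _ => Finset.mem_univ _)
  have h2 : ∀ c, tgs (Y := Y) S c = (hS.toFinset.filter (fun a => tgcls Y n a = c)).card := by
    intro c
    rw [tgs, ← Set.ncard_coe_finset]
    congr 1
    ext a
    simp only [Set.mem_inter_iff, Finset.coe_filter, Set.Finite.mem_toFinset,
      Set.mem_setOf_eq, mem_tgC_iff]
    try rfl
    try tauto
  calc ∑ c : ZMod (2*n), tgs (Y := Y) S c
      = ∑ c : ZMod (2*n), (hS.toFinset.filter (fun a => tgcls Y n a = c)).card :=
        Finset.sum_congr rfl (fun c _ => h2 c)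
    _ = hS.toFinset.card := h1.symm
    _ = S.ncard := (Set.ncard_eq_toFinset_card S hS).symm

lemma tgs_partial (hn : 3 ≤ n) (S : Set (α × ZMod n)) (F : Finset (ZMod (2*n))) :
    ∑ c ∈ F, tgs (Y := Y) S c ≤ S.ncard := by
  rw [← tgs_sum (Y := Y) hn S]
  exact Finset.sum_le_sum_of_subset (Finset.subset_univ F)

lemma tgC_nonempty (hn : 3 ≤ n) (hbip : G.IsBipartition X Y)
    (hX : G.minDeg + 1 ≤ X.ncard) (hY : G.minDeg + 1 ≤ Y.ncard) (c : ZMod (2*n)) :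
    1 + G.minDeg ≤ (tgC Y n c).ncard := by
  rw [tgC_ncard hn hbip c]
  split_ifs <;> omega

/-- if few vertices of a class are removed, something remains. -/
lemma tgC_diff_nonempty (hn : 3 ≤ n) (hbip : G.IsBipartition X Y)
    (hX : G.minDeg + 1 ≤ X.ncard) (hY : G.minDeg + 1 ≤ Y.ncard)
    {S : Set (α × ZMod n)} {c : ZMod (2*n)} (hs : tgs (Y := Y) S c ≤ G.minDeg) :
    ((tgC Y n c) \ S).Nonempty := by
  have h1 := tgC_nonempty (G := G) hn hbip hX hY c
  have h2 := Set.ncard_inter_add_ncard_diff_eq_ncard (tgC Y n c) S (Set.toFinite _)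
  have h3 : (tgC Y n c ∩ S).ncard = tgs (Y := Y) S c := by
    rw [tgs, Set.inter_comm]
  apply Set.nonempty_of_ncard_ne_zero
  omega

end TGInfra4
section TGInfra5

variable {α : Type u} [Finite α] {G : SimpleGraph α} {X Y : Set α} {n : ℕ}
  [NeZero n] [NeZero (2*n)]

lemma tg_good_block (hn : 3 ≤ n) (hbip : G.IsBipartition X Y)
    {S : Set (α × ZMod n)} {c : ZMod (2*n)}
    (hblk : tgs (Y := Y) S c + tgs (Y := Y) S (c+1) < G.vConn)
    {a b : α × ZMod n} (ha : a ∈ tgC Y n c ∪ tgC Y n (c+1))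
    (hb : b ∈ tgC Y n c ∪ tgC Y n (c+1))
    (haS : a ∉ S) (hbS : b ∉ S) :
    ((tildeG G X Y n).induce Sᶜ).Reachable ⟨a, haS⟩ ⟨b, hbS⟩ := by
  classical
  set T : Set α := tgphi Y n c ⁻¹' S with hT
  have hTcard : T.ncard < G.vConn := by
    have himg : tgphi Y n c '' T ⊆ (S ∩ tgC Y n c) ∪ (S ∩ tgC Y n (c+1)) := by
      rintro _ ⟨t, ht, rfl⟩
      rcases tgphi_mem_union (G := G) hn hbip c t with h | h
      · exact Or.inl ⟨ht, h⟩
      · exact Or.inr ⟨ht, h⟩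
    calc T.ncard = (tgphi Y n c '' T).ncard :=
          (Set.ncard_image_of_injective _ (tgphi_inj c)).symm
      _ ≤ ((S ∩ tgC Y n c) ∪ (S ∩ tgC Y n (c+1))).ncard :=
          Set.ncard_le_ncard himg (Set.toFinite _)
      _ ≤ tgs (Y := Y) S c + tgs (Y := Y) S (c+1) := Set.ncard_union_le _ _
      _ < G.vConn := hblk
  have hconn := aux_connected_of_lt_vConn hTcard
  have haT : a.1 ∈ Tᶜ := by
    intro h
    rw [hT, Set.mem_preimage, tgphi_eq_self hn ha] at h
    exact haS h
  have hbT : b.1 ∈ Tᶜ := by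
    intro h
    rw [hT, Set.mem_preimage, tgphi_eq_self hn hb] at h
    exact hbS h
  let F : (G.induce Tᶜ) →g ((tildeG G X Y n).induce Sᶜ) :=
    { toFun := fun w => ⟨tgphi Y n c w.1, w.2⟩,
      map_rel' := fun h => tgphi_adj hn hbip h c }
  have hreach := (hconn.preconnected ⟨a.1, haT⟩ ⟨b.1, hbT⟩).map F
  have e1 : F ⟨a.1, haT⟩ = ⟨a, haS⟩ := Subtype.ext (tgphi_eq_self hn ha)
  have e2 : F ⟨b.1, hbT⟩ = ⟨b, hbS⟩ := Subtype.ext (tgphi_eq_self hn hb)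
  rwa [e1, e2] at hreach

lemma tg_copy_adj_succ (hn : 3 ≤ n) (hbip : G.IsBipartition X Y)
    {w : α × ZMod n} {c : ZMod (2*n)} {u : α}
    (hw : w ∈ tgC Y n c) (hadj : G.Adj w.1 u) :
    (tildeG G X Y n).Adj w (tgphi Y n c u) := by
  have := tgphi_adj hn hbip hadj c
  rwa [tgphi_eq_self_left hn hw] at this

lemma tg_copy_adj_pred (hn : 3 ≤ n) (hbip : G.IsBipartition X Y)
    {w : α × ZMod n} {c : ZMod (2*n)} {u : α}
    (hw : w ∈ tgC Y n c) (hadj : G.Adj w.1 u) :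
    (tildeG G X Y n).Adj w (tgphi Y n (c-1) u) := by
  have hw' : w ∈ tgC Y n ((c-1)+1) := by rwa [sub_add_cancel]
  have := tgphi_adj hn hbip hadj (c-1)
  rwa [tgphi_eq_self_right hn hw'] at this

lemma tg_boundary_succ (hn : 3 ≤ n) (hbip : G.IsBipartition X Y)
    {S : Set (α × ZMod n)} {c : ZMod (2*n)} {w : α × ZMod n}
    (hw : w ∈ tgC Y n c)
    (hnb : ∀ u : α, G.Adj w.1 u → tgphi Y n c u ∈ S) :
    G.minDeg ≤ tgs (Y := Y) S (c+1) := by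
  have himg : tgphi Y n c '' G.neighborSet w.1 ⊆ S ∩ tgC Y n (c+1) := by
    rintro _ ⟨u, hu, rfl⟩
    exact ⟨hnb u hu, tgphi_opp_succ hn hbip hw hu⟩
  calc G.minDeg ≤ (G.neighborSet w.1).ncard := aux_minDeg_le w.1
    _ = (tgphi Y n c '' G.neighborSet w.1).ncard :=
        (Set.ncard_image_of_injective _ (tgphi_inj c)).symm
    _ ≤ (S ∩ tgC Y n (c+1)).ncard := Set.ncard_le_ncard himg (Set.toFinite _)

lemma tg_boundary_pred (hn : 3 ≤ n) (hbip : G.IsBipartition X Y)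
    {S : Set (α × ZMod n)} {c : ZMod (2*n)} {w : α × ZMod n}
    (hw : w ∈ tgC Y n c)
    (hnb : ∀ u : α, G.Adj w.1 u → tgphi Y n (c-1) u ∈ S) :
    G.minDeg ≤ tgs (Y := Y) S (c-1) := by
  have hw' : w ∈ tgC Y n ((c-1)+1) := by rwa [sub_add_cancel]
  have himg : tgphi Y n (c-1) '' G.neighborSet w.1 ⊆ S ∩ tgC Y n (c-1) := by
    rintro _ ⟨u, hu, rfl⟩
    exact ⟨hnb u hu, tgphi_opp_pred hn hbip hw' hu⟩
  calc G.minDeg ≤ (G.neighborSet w.1).ncard := aux_minDeg_le w.1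
    _ = (tgphi Y n (c-1) '' G.neighborSet w.1).ncard :=
        (Set.ncard_image_of_injective _ (tgphi_inj (c-1))).symm
    _ ≤ (S ∩ tgC Y n (c-1)).ncard := Set.ncard_le_ncard himg (Set.toFinite _)

lemma tg_chain (hn : 3 ≤ n) (hbip : G.IsBipartition X Y)
    (hX : G.minDeg + 1 ≤ X.ncard) (hY : G.minDeg + 1 ≤ Y.ncard)
    (hκ1 : 1 ≤ G.vConn) {S : Set (α × ZMod n)}
    (a : ZMod (2*n)) (m : ℕ) (hm : 1 ≤ m)
    (h0 : ∀ i : ℕ, i ≤ m → tgs (Y := Y) S (a + (i : ℕ)) = 0) :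
    ∀ i : ℕ, i ≤ m → ∀ (w w' : α × ZMod n) (hw : w ∈ tgC Y n a \ S)
      (hw' : w' ∈ tgC Y n (a + (i : ℕ)) \ S),
      ((tildeG G X Y n).induce Sᶜ).Reachable ⟨w, hw.2⟩ ⟨w', hw'.2⟩ := by
  intro i
  induction i with
  | zero =>
    intro _ w w' hw hw'
    have h00 : tgs (Y := Y) S a = 0 := by simpa using h0 0 (by omega)
    have h01 : tgs (Y := Y) S (a+1) = 0 := by simpa using h0 1 hm
    have hw'a : w' ∈ tgC Y n a \ S := by simpa using hw'
    exact tg_good_block hn hbip (by rw [h00, h01]; omega)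
      (Or.inl hw.1) (Or.inl hw'a.1) hw.2 hw'a.2
  | succ i ih =>
    intro hi w w' hw hw'
    have hii : i ≤ m := by omega
    have hsi : tgs (Y := Y) S (a + (i : ℕ)) = 0 := h0 i hii
    obtain ⟨w'', hw''⟩ := tgC_diff_nonempty (G := G) hn hbip hX hY
      (S := S) (c := a + (i : ℕ)) (by rw [hsi]; omega)
    have h1 := ih hii w w'' hw hw''
    have hcast : a + ((i+1 : ℕ) : ZMod (2*n)) = (a + (i : ℕ)) + 1 := by push_cast; ring
    have hw'2 : w' ∈ tgC Y n ((a + (i : ℕ)) + 1) \ S := by rwa [hcast] at hw'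
    have h2 : ((tildeG G X Y n).induce Sᶜ).Reachable ⟨w'', hw''.2⟩ ⟨w', hw'2.2⟩ :=
      tg_good_block hn hbip
        (by rw [hsi, show tgs (Y := Y) S ((a + (i:ℕ))+1) = 0 from hcast ▸ h0 (i+1) hi]; omega)
        (Or.inl hw''.1) (Or.inr hw'2.1) hw''.2 hw'2.2
    exact h1.trans h2

end TGInfra5
section CycleWalk

/-- Walking around the cycle `ZMod N` from a point outside `P`, in both
directions, until entering `P`; the two ``entry doorsteps'' carry weight `δ`. -/
lemma cycle_walk {N : ℕ} (hN : 6 ≤ N) (P : ZMod N → Prop) (δ : ℕ) (s : ZMod N → ℕ)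
    {c₀ : ZMod N} (hP0 : P c₀)
    (hsucc : ∀ c, P c → ¬ P (c+1) → δ ≤ s (c+1))
    (hpred : ∀ c, P c → ¬ P (c-1) → δ ≤ s (c-1))
    {c : ZMod N} (hc : ¬ P c) :
    δ ≤ s c ∨ ∃ e₁ e₂ : ZMod N, e₁ ≠ e₂ ∧ δ ≤ s e₁ ∧ δ ≤ s e₂ := by
  classical
  haveI : NeZero N := ⟨by omega⟩
  have hc₀c : c₀ ≠ c := fun h => hc (h ▸ hP0)
  -- forward walk
  set t : ℕ := (c₀ - c).val with htdef
  have ht1 : 1 ≤ t := by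
    rcases Nat.eq_zero_or_pos t with h | h
    · exfalso
      have : c₀ - c = 0 := (ZMod.val_eq_zero _).mp h
      exact hc₀c (by linear_combination this)
    · omega
  have ht2 : t < N := (c₀ - c).val_lt
  have htc : c + (t : ℕ) = c₀ := by
    have : ((t : ℕ) : ZMod N) = c₀ - c := ZMod.natCast_rightInverse _
    rw [this]; ring
  have hex : ∃ k, P (c + ((k+1 : ℕ) : ZMod N)) :=
    ⟨t - 1, by rw [show t-1+1 = t by omega, htc]; exact hP0⟩
  set k := Nat.find hex with hkdef
  have hk : P (c + ((k+1 : ℕ) : ZMod N)) := Nat.find_spec hex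
  have hkb : k ≤ t - 1 := Nat.find_min' hex
    (by rw [show t-1+1 = t by omega, htc]; exact hP0)
  have hknot : ∀ j : ℕ, j ≤ k → ¬ P (c + (j : ℕ)) := by
    intro j hj
    match j with
    | 0 => simpa using hc
    | (j'+1) =>
      exact Nat.find_min hex (by omega)
  have hs₁ : δ ≤ s (c + (k : ℕ)) := by
    have h1 := hpred _ hk (by
      rw [show (c + ((k+1 : ℕ) : ZMod N)) - 1 = c + (k : ℕ) by push_cast; ring]
      exact hknot k le_rfl)
    rwa [show (c + ((k+1 : ℕ) : ZMod N)) - 1 = c + (k : ℕ) by push_cast; ring] at h1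
  -- backward walk
  set t' : ℕ := (c - c₀).val with ht'def
  have ht1' : 1 ≤ t' := by
    rcases Nat.eq_zero_or_pos t' with h | h
    · exfalso
      have : c - c₀ = 0 := (ZMod.val_eq_zero _).mp h
      exact hc₀c (by linear_combination -this)
    · omega
  have ht2' : t' < N := (c - c₀).val_lt
  have htc' : c - (t' : ℕ) = c₀ := by
    have : ((t' : ℕ) : ZMod N) = c - c₀ := ZMod.natCast_rightInverse _
    rw [this]; ring
  have hex' : ∃ l, P (c - ((l+1 : ℕ) : ZMod N)) :=
    ⟨t' - 1, by rw [show t'-1+1 = t' by omega, htc']; exact hP0⟩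
  set l := Nat.find hex' with hldef
  have hl : P (c - ((l+1 : ℕ) : ZMod N)) := Nat.find_spec hex'
  have hlb : l ≤ t' - 1 := Nat.find_min' hex'
    (by rw [show t'-1+1 = t' by omega, htc']; exact hP0)
  have hlnot : ∀ j : ℕ, j ≤ l → ¬ P (c - (j : ℕ)) := by
    intro j hj
    match j with
    | 0 => simpa using hc
    | (j'+1) =>
      exact Nat.find_min hex' (by omega)
  have hs₂ : δ ≤ s (c - (l : ℕ)) := by
    have h1 := hsucc _ hl (by
      rw [show (c - ((l+1 : ℕ) : ZMod N)) + 1 = c - (l : ℕ) by push_cast; ring]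
      exact hlnot l le_rfl)
    rwa [show (c - ((l+1 : ℕ) : ZMod N)) + 1 = c - (l : ℕ) by push_cast; ring] at h1
  by_cases he : c + (k : ℕ) = c - (l : ℕ)
  · -- then N ∣ k + l, so k = l = 0 or the whole cycle is outside P
    have hzero : ((k + l : ℕ) : ZMod N) = 0 := by
      push_cast
      linear_combination he
    have hdvd : N ∣ (k + l) := (ZMod.natCast_eq_zero_iff _ _).mp hzero
    have hkl : k + l = 0 ∨ k + l = N := by
      rcases hdvd with ⟨q, hq⟩
      match q, hq with
      | 0, hq => omega
      | 1, hq => omega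
      | (q+2), hq =>
        have h2 : N * (q+2) = N*q + N*2 := by ring
        omega
    rcases hkl with hkl | hkl
    · left
      have hk0 : k = 0 := by omega
      have := hs₁
      rwa [hk0, show ((0:ℕ) : ZMod N) = 0 by simp, add_zero] at this
    · exfalso
      rcases le_or_gt t k with h | h
      · exact hknot t h (htc ▸ hP0)
      · have hj : N - t ≤ l := by omega
        have : c - ((N - t : ℕ) : ZMod N) = c + (t : ℕ) := by
          have h2 : ((N - t : ℕ) : ZMod N) + ((t : ℕ) : ZMod N) = 0 := by
            rw [show ((N - t : ℕ) : ZMod N) + ((t : ℕ) : ZMod N)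
                = (((N - t) + t : ℕ) : ZMod N) by push_cast; ring]
            rw [show (N - t) + t = N by omega]
            exact ZMod.natCast_self N
          linear_combination -h2
        exact hlnot (N - t) hj (by rw [this, htc]; exact hP0)
  · right
    exact ⟨c + (k : ℕ), c - (l : ℕ), he, hs₁, hs₂⟩

end CycleWalk
section TGB2

variable {α : Type u} [Finite α] {G : SimpleGraph α} {X Y : Set α} {n : ℕ}
  [NeZero n] [NeZero (2*n)]

lemma tg_castnat_inj (hn : 3 ≤ n) {i j : ℕ} (hi : i < 2*n) (hj : j < 2*n)
    (h : ((i : ℕ) : ZMod (2*n)) = ((j : ℕ) : ZMod (2*n))) : i = j := by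
  have h1 : ((i : ℕ) : ZMod (2*n)).val = i := ZMod.val_cast_of_lt hi
  have h2 : ((j : ℕ) : ZMod (2*n)).val = j := ZMod.val_cast_of_lt hj
  rw [← h1, ← h2, h]

/-- a vertex in a class whose neighbouring class has no removed vertices has a
removed-free neighbour there. -/
lemma tg_bridge_succ (hn : 3 ≤ n) (hbip : G.IsBipartition X Y)
    (hδ1 : 1 ≤ G.minDeg) {S : Set (α × ZMod n)} {c : ZMod (2*n)}
    {w : α × ZMod n} (hw : w ∈ tgC Y n c \ S) (h0 : tgs (Y := Y) S (c+1) = 0) :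
    ∃ b, b ∈ tgC Y n (c+1) \ S ∧ (tildeG G X Y n).Adj w b := by
  have hne : (G.neighborSet w.1).Nonempty := by
    apply Set.nonempty_of_ncard_ne_zero
    have := aux_minDeg_le (H := G) w.1
    omega
  obtain ⟨u, hu⟩ := hne
  refine ⟨tgphi Y n c u, ⟨tgphi_opp_succ hn hbip hw.1 hu, ?_⟩, tg_copy_adj_succ hn hbip hw.1 hu⟩
  intro hmem
  have : tgphi Y n c u ∈ S ∩ tgC Y n (c+1) := ⟨hmem, tgphi_opp_succ hn hbip hw.1 hu⟩
  have hem : S ∩ tgC Y n (c+1) = ∅ := by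
    rw [tgs] at h0
    exact (Set.ncard_eq_zero (Set.toFinite _)).mp h0
  rw [hem] at this
  exact this

lemma tg_bridge_pred (hn : 3 ≤ n) (hbip : G.IsBipartition X Y)
    (hδ1 : 1 ≤ G.minDeg) {S : Set (α × ZMod n)} {c : ZMod (2*n)}
    {w : α × ZMod n} (hw : w ∈ tgC Y n c \ S) (h0 : tgs (Y := Y) S (c-1) = 0) :
    ∃ b, b ∈ tgC Y n (c-1) \ S ∧ (tildeG G X Y n).Adj w b := by
  have hne : (G.neighborSet w.1).Nonempty := by
    apply Set.nonempty_of_ncard_ne_zero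
    have := aux_minDeg_le (H := G) w.1
    omega
  obtain ⟨u, hu⟩ := hne
  have hw' : w ∈ tgC Y n ((c-1)+1) := by rw [sub_add_cancel]; exact hw.1
  refine ⟨tgphi Y n (c-1) u, ⟨tgphi_opp_pred hn hbip hw' hu, ?_⟩,
    tg_copy_adj_pred hn hbip hw.1 hu⟩
  intro hmem
  have : tgphi Y n (c-1) u ∈ S ∩ tgC Y n (c-1) := ⟨hmem, tgphi_opp_pred hn hbip hw' hu⟩
  have hem : S ∩ tgC Y n (c-1) = ∅ := by
    rw [tgs] at h0
    exact (Set.ncard_eq_zero (Set.toFinite _)).mp h0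
  rw [hem] at this
  exact this

/-- Case where exactly two classes contain removed vertices: the rest of the
graph stays connected, contradiction with `S` being a vertex cut. -/
lemma tg_B2 (hn : 3 ≤ n) (hbip : G.IsBipartition X Y)
    (hX : G.minDeg + 1 ≤ X.ncard) (hY : G.minDeg + 1 ≤ Y.ncard)
    (hκ1 : 1 ≤ G.vConn) (hδ1 : 1 ≤ G.minDeg)
    {S : Set (α × ZMod n)} (hScut : (tildeG G X Y n).IsVertexCut S)
    (hIso : ∀ a, a ∉ S → ∃ b, (tildeG G X Y n).Adj a b ∧ b ∉ S)
    (c₁ c₂ : ZMod (2*n)) (hd1 : 1 ≤ (c₂ - c₁).val) (hdn : (c₂ - c₁).val ≤ n)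
    (h0 : ∀ c, c ≠ c₁ → c ≠ c₂ → tgs (Y := Y) S c = 0)
    (hs1 : tgs (Y := Y) S c₁ ≤ G.minDeg) (hs2 : tgs (Y := Y) S c₂ ≤ G.minDeg) :
    False := by
  classical
  set d : ℕ := (c₂ - c₁).val with hddef
  have hdlt : d < 2*n := (c₂ - c₁).val_lt
  have hc2c1 : c₂ = c₁ + (d : ℕ) := by
    have : ((d : ℕ) : ZMod (2*n)) = c₂ - c₁ := ZMod.natCast_rightInverse _
    rw [this]; ring
  -- vanishing of `s` away from `c₁, c₂`, in terms of offsets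
  have hz : ∀ t : ℕ, t < 2*n → t ≠ 0 → t ≠ d → tgs (Y := Y) S (c₁ + (t : ℕ)) = 0 := by
    intro t ht ht0 htd
    apply h0
    · intro h
      have : ((t : ℕ) : ZMod (2*n)) = ((0 : ℕ) : ZMod (2*n)) := by
        push_cast
        linear_combination h
      exact ht0 (tg_castnat_inj hn ht (by omega) this)
    · intro h
      rw [hc2c1] at h
      have : ((t : ℕ) : ZMod (2*n)) = ((d : ℕ) : ZMod (2*n)) := by linear_combination h
      exact htd (tg_castnat_inj hn ht hdlt this)
  set G' := (tildeG G X Y n).induce Sᶜ with hG'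
  -- run B : classes c₂+1, ..., c₂+(2n-d-1)
  set aB : ZMod (2*n) := c₂ + 1 with haB
  set mB : ℕ := 2*n - d - 2 with hmB
  have hmB1 : 1 ≤ mB := by omega
  have haBoff : ∀ i : ℕ, aB + (i : ℕ) = c₁ + ((d + 1 + i : ℕ) : ZMod (2*n)) := by
    intro i
    rw [haB, hc2c1]
    push_cast
    ring
  have h0B : ∀ i : ℕ, i ≤ mB → tgs (Y := Y) S (aB + (i : ℕ)) = 0 := by
    intro i hi
    rw [haBoff i]
    exact hz (d+1+i) (by omega) (by omega) (by omega)
  -- the anchor vertex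
  obtain ⟨ustar, hustar⟩ := tgC_diff_nonempty (G := G) hn hbip hX hY
    (S := S) (c := aB) (by
      have h := h0B 0 (by omega)
      rw [show aB + ((0:ℕ) : ZMod (2*n)) = aB by push_cast; ring] at h
      omega)
  have hustar0 : ustar ∈ tgC Y n (aB + ((0:ℕ) : ZMod (2*n))) \ S := by
    rwa [show aB + ((0:ℕ) : ZMod (2*n)) = aB by push_cast; ring]
  -- reachability to the anchor within run B
  have hreachB : ∀ i : ℕ, i ≤ mB → ∀ w (hw : w ∈ tgC Y n (aB + (i : ℕ)) \ S),
      G'.Reachable ⟨w, hw.2⟩ ⟨ustar, hustar.2⟩ := by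
    intro i hi w hw
    exact (tg_chain hn hbip hX hY hκ1 aB mB hmB1 h0B i hi ustar w hustar hw).symm
  -- all vertices of class c₁ reach the anchor
  have hA : ∀ w (hw : w ∈ tgC Y n c₁ \ S), G'.Reachable ⟨w, hw.2⟩ ⟨ustar, hustar.2⟩ := by
    intro w hw
    have hm1 : tgs (Y := Y) S (c₁ - 1) = 0 := by
      rw [show c₁ - 1 = c₁ + ((2*n-1 : ℕ) : ZMod (2*n)) by
        rw [Nat.cast_sub (by omega : 1 ≤ 2*n), ZMod.natCast_self]
        push_cast; ring]
      exact hz (2*n-1) (by omega) (by omega) (by omega)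
    obtain ⟨b, hb, hadj⟩ := tg_bridge_pred hn hbip hδ1 hw hm1
    have hbB : b ∈ tgC Y n (aB + ((mB : ℕ) : ZMod (2*n))) \ S := by
      rw [show aB + ((mB : ℕ) : ZMod (2*n)) = c₁ - 1 by
        rw [haB, hc2c1, hmB, Nat.cast_sub (by omega : 2 ≤ 2*n - d),
          Nat.cast_sub (by omega : d ≤ 2*n), ZMod.natCast_self]
        push_cast; ring]
      exact hb
    have h1 : G'.Adj ⟨w, hw.2⟩ ⟨b, hb.2⟩ := hadj
    exact (h1.reachable).trans (hreachB mB le_rfl b hbB)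
  -- all vertices of class c₂ reach the anchor
  have hB : ∀ w (hw : w ∈ tgC Y n c₂ \ S), G'.Reachable ⟨w, hw.2⟩ ⟨ustar, hustar.2⟩ := by
    intro w hw
    have hp1 : tgs (Y := Y) S (c₂ + 1) = 0 := by
      rw [← haB, show aB = aB + ((0:ℕ) : ZMod (2*n)) by push_cast; ring]
      exact h0B 0 (by omega)
    obtain ⟨b, hb, hadj⟩ := tg_bridge_succ hn hbip hδ1 hw hp1
    have hbB : b ∈ tgC Y n (aB + ((0 : ℕ) : ZMod (2*n))) \ S := by
      rw [show aB + ((0:ℕ) : ZMod (2*n)) = c₂ + 1 by push_cast; rw [haB]; ring]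
      exact hb
    have h1 : G'.Adj ⟨w, hw.2⟩ ⟨b, hb.2⟩ := hadj
    exact (h1.reachable).trans (hreachB 0 (by omega) b hbB)
  -- every vertex reaches the anchor
  have key : ∀ z : ↥(Sᶜ), G'.Reachable z ⟨ustar, hustar.2⟩ := by
    intro z
    have hzS : (z : α × ZMod n) ∉ S := z.2
    set c : ZMod (2*n) := tgcls Y n (z : α × ZMod n) with hcdef
    have hzc : (z : α × ZMod n) ∈ tgC Y n c := rfl
    set t : ℕ := (c - c₁).val with htdef
    have htlt : t < 2*n := (c - c₁).val_lt
    have hct : c = c₁ + (t : ℕ) := by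
      have : ((t : ℕ) : ZMod (2*n)) = c - c₁ := ZMod.natCast_rightInverse _
      rw [this]; ring
    -- helper to finish given reachability of z.val
    have hz' : (z : α × ZMod n) ∈ tgC Y n c \ S := ⟨hzc, hzS⟩
    rcases Nat.eq_zero_or_pos t with ht0 | htpos
    · -- class c₁
      have : (z : α × ZMod n) ∈ tgC Y n c₁ \ S := by
        rw [ht0] at hct
        simp only [Nat.cast_zero, add_zero] at hct
        rwa [← hct]
      exact hA _ this
    rcases eq_or_ne t d with htd | htd
    · -- class c₂
      have : (z : α × ZMod n) ∈ tgC Y n c₂ \ S := by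
        rw [hc2c1, ← htd, ← hct]
        exact hz'
      exact hB _ this
    rcases Nat.lt_or_ge t d with htltd | htged
    · -- run A : 1 ≤ t ≤ d-1
      rcases Nat.lt_or_ge d 3 with hd3 | hd3
      · -- d = 2, t = 1 : use the no-isolated-vertex hypothesis
        have hd2 : d = 2 := by omega
        have ht1 : t = 1 := by omega
        obtain ⟨b, hadj, hbS⟩ := hIso _ hzS
        have hcls := tg_adj_cls hn hbip hadj
        rcases hcls with hcb | hcb
        · -- b in class c+1 = c₂
          have hbmem : b ∈ tgC Y n c₂ \ S := by
            refine ⟨?_, hbS⟩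
            rw [mem_tgC_iff, hcb, ← hcdef, hct, hc2c1, ht1, hd2]
            push_cast
            ring
          have h1 : G'.Adj z ⟨b, hbS⟩ := by
            show (tildeG G X Y n).Adj _ _
            exact hadj
          exact (h1.reachable).trans (hB _ hbmem)
        · -- b in class c-1 = c₁
          have hbmem : b ∈ tgC Y n c₁ \ S := by
            refine ⟨?_, hbS⟩
            rw [mem_tgC_iff]
            have : tgcls Y n b = c - 1 := by rw [← hcdef] at hcb; linear_combination -hcb
            rw [this, hct, ht1]
            push_cast
            ring
          have h1 : G'.Adj z ⟨b, hbS⟩ := hadj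
          exact (h1.reachable).trans (hA _ hbmem)
      · -- d ≥ 3: use the chain along run A then bridge at c₁
        set aA : ZMod (2*n) := c₁ + 1 with haA
        set mA : ℕ := d - 2 with hmA
        have hmA1 : 1 ≤ mA := by omega
        have h0A : ∀ i : ℕ, i ≤ mA → tgs (Y := Y) S (aA + (i : ℕ)) = 0 := by
          intro i hi
          rw [show aA + ((i:ℕ) : ZMod (2*n)) = c₁ + ((1 + i : ℕ) : ZMod (2*n)) by
            rw [haA]; push_cast; ring]
          exact hz (1+i) (by omega) (by omega) (by omega)
        -- z is in class aA + (t-1)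
        have hzA : (z : α × ZMod n) ∈ tgC Y n (aA + ((t-1 : ℕ) : ZMod (2*n))) \ S := by
          set j' : ℕ := t - 1 with hj'def
          rw [show aA + ((j':ℕ) : ZMod (2*n)) = c₁ + ((t : ℕ) : ZMod (2*n)) by
            rw [haA, show (t : ℕ) = j' + 1 by omega]; push_cast; ring, ← hct]
          exact hz'
        -- bridge from a vertex of c₁ into run A
        obtain ⟨v₁, hv₁⟩ := tgC_diff_nonempty (G := G) hn hbip hX hY
          (S := S) (c := c₁) hs1
        have hp1 : tgs (Y := Y) S (c₁ + 1) = 0 := by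
          rw [show c₁ + 1 = c₁ + ((1:ℕ) : ZMod (2*n)) by push_cast; ring]
          exact hz 1 (by omega) (by omega) (by omega)
        obtain ⟨wA, hwA, hadjA⟩ := tg_bridge_succ hn hbip hδ1 hv₁ hp1
        have hwA0 : wA ∈ tgC Y n aA \ S := by
          rwa [haA]
        have h1 : G'.Reachable ⟨z.1, hz'.2⟩ ⟨wA, hwA.2⟩ :=
          (tg_chain hn hbip hX hY hκ1 aA mA hmA1 h0A (t-1) (by omega) wA z.1 hwA0 hzA).symm
        have h2 : G'.Adj ⟨wA, hwA.2⟩ ⟨v₁, hv₁.2⟩ := (tildeG G X Y n).adj_symm hadjA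
        exact h1.trans (h2.reachable.trans (hA _ hv₁))
    · -- run B : d+1 ≤ t ≤ 2n-1
      set j : ℕ := t - d - 1 with hjdef
      have hzB : (z : α × ZMod n) ∈ tgC Y n (aB + ((j : ℕ) : ZMod (2*n))) \ S := by
        rw [show aB + ((j:ℕ) : ZMod (2*n)) = c₁ + ((t : ℕ) : ZMod (2*n)) by
          rw [haB, hc2c1, show (t : ℕ) = d + 1 + j by omega]; push_cast; ring, ← hct]
        exact hz'
      exact hreachB j (by omega) z.1 hzB
  -- hence the graph minus S is connected: contradiction
  apply hScut
  rw [SimpleGraph.connected_iff]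
  exact ⟨fun z z' => (key z).trans (key z').symm, ⟨⟨ustar, hustar.2⟩⟩⟩

end TGB2
section TGDeg

variable {α : Type u} [Finite α] {G : SimpleGraph α} {X Y : Set α} {n : ℕ}
  [NeZero n] [NeZero (2*n)]

lemma tgC_disjoint {c c' : ZMod (2*n)} (h : c ≠ c') :
    Disjoint (tgC Y n c) (tgC Y n c') := by
  rw [Set.disjoint_left]
  intro a ha ha'
  exact h (ha.symm.trans ha')

lemma tg_two_ne (hn : 3 ≤ n) {c : ZMod (2*n)} : c + 1 ≠ c - 1 := by
  intro h
  have h2 : ((2 : ℕ) : ZMod (2*n)) = 0 := by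
    push_cast
    linear_combination h
  have hdvd := (ZMod.natCast_eq_zero_iff 2 (2*n)).mp h2
  have := Nat.le_of_dvd (by norm_num) hdvd
  omega

lemma tg_deg_eq (hn : 3 ≤ n) (hbip : G.IsBipartition X Y) (a : α × ZMod n) :
    ((tildeG G X Y n).neighborSet a).ncard = 2 * (G.neighborSet a.1).ncard := by
  rw [tg_nbhd_eq hn hbip a]
  set c := tgcls Y n a with hc
  have hac : a ∈ tgC Y n c := rfl
  have hac' : a ∈ tgC Y n ((c-1)+1) := by rw [sub_add_cancel]; exact hac
  have hsub1 : tgphi Y n c '' G.neighborSet a.1 ⊆ tgC Y n (c+1) := by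
    rintro _ ⟨u, hu, rfl⟩
    exact tgphi_opp_succ hn hbip hac hu
  have hsub2 : tgphi Y n (c-1) '' G.neighborSet a.1 ⊆ tgC Y n (c-1) := by
    rintro _ ⟨u, hu, rfl⟩
    exact tgphi_opp_pred hn hbip hac' hu
  have hdisj : Disjoint (tgphi Y n c '' G.neighborSet a.1)
      (tgphi Y n (c-1) '' G.neighborSet a.1) :=
    Set.disjoint_of_subset hsub1 hsub2 (tgC_disjoint (tg_two_ne hn))
  rw [Set.ncard_union_eq hdisj (Set.toFinite _) (Set.toFinite _),
    Set.ncard_image_of_injective _ (tgphi_inj c),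
    Set.ncard_image_of_injective _ (tgphi_inj (c-1))]
  ring

lemma tg_deg_lower (hn : 3 ≤ n) (hbip : G.IsBipartition X Y) (a : α × ZMod n) :
    2 * G.minDeg ≤ ((tildeG G X Y n).neighborSet a).ncard := by
  rw [tg_deg_eq hn hbip a]
  have := aux_minDeg_le (H := G) a.1
  omega

lemma tg_vConn_le (hn : 3 ≤ n) (hbip : G.IsBipartition X Y)
    (hne : Nonempty α) (hcard : 2 * G.minDeg + 2 ≤ Nat.card α) :
    (tildeG G X Y n).vConn ≤ 2 * G.minDeg := by
  obtain ⟨x₀, hx₀⟩ := aux_minDeg_attained (H := G)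
  set a₀ : α × ZMod n := (x₀, 0) with ha₀
  set N : Set (α × ZMod n) := (tildeG G X Y n).neighborSet a₀ with hN
  have hNcard : N.ncard = 2 * G.minDeg := by
    rw [hN, tg_deg_eq hn hbip a₀, ha₀, hx₀]
  have hcardV : Nat.card (α × ZMod n) = Nat.card α * n := by
    rw [Nat.card_prod, Nat.card_zmod]
  have hbig : 2 * G.minDeg + 2 ≤ Nat.card (α × ZMod n) := by
    rw [hcardV]
    nlinarith [hcard, hn]
  have ha₀N : a₀ ∈ Nᶜ := by
    intro h
    exact (tildeG G X Y n).irrefl h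
  have hTsub : ¬ ((N ∪ {a₀})ᶜ = ∅) := by
    intro h
    have huniv : (N ∪ {a₀}) = Set.univ := by
      rw [← Set.compl_empty_iff]; exact h
    have h1 : Nat.card (α × ZMod n) ≤ 2 * G.minDeg + 1 := by
      calc Nat.card (α × ZMod n) = (Set.univ : Set (α × ZMod n)).ncard :=
            (Set.ncard_univ _).symm
        _ = (N ∪ {a₀}).ncard := by rw [huniv]
        _ ≤ N.ncard + ({a₀} : Set (α × ZMod n)).ncard := Set.ncard_union_le _ _
        _ = 2 * G.minDeg + 1 := by rw [hNcard, Set.ncard_singleton]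
    omega
  obtain ⟨b, hbmem⟩ := Set.nonempty_iff_ne_empty.mpr hTsub
  have hbx : b ≠ a₀ := fun h => hbmem (Or.inr (by simp [h]))
  have hbN : b ∈ Nᶜ := fun h => hbmem (Or.inl h)
  have hcut : (tildeG G X Y n).IsVertexCut N := by
    apply aux_isolated_not_connected _ (⟨a₀, ha₀N⟩ : ↥Nᶜ) ⟨b, hbN⟩
    · intro h
      exact hbx (congrArg Subtype.val h).symm
    · rintro ⟨x, hxc⟩ hadj
      exact hxc hadj
  calc (tildeG G X Y n).vConn ≤ N.ncard := aux_vConn_le_of_cut hcut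
    _ = 2 * G.minDeg := hNcard

end TGDeg

/-- If |X| ≥ δ(G)+1, |Y| ≥ δ(G)+1 and κ(G) > (2/n)·δ(G), then G̃ₙ is
super connected. -/
theorem stmt_6 (G : SimpleGraph α) (X Y : Set α)
    (hGc : G.Connected) (hbip : G.IsBipartition X Y) (n : ℕ) (hn : 3 ≤ n)
    (hX : G.minDeg + 1 ≤ X.ncard) (hY : G.minDeg + 1 ≤ Y.ncard)
    (hk : 2 * G.minDeg < n * G.vConn) :
    (tildeG G X Y n).SuperConnected := by
  classical
  obtain ⟨hfin, hκ1, hκδ, hδ1, hcard⟩ := G_basics hGc hbip hX hY hk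
  haveI : Finite α := hfin
  haveI : NeZero n := ⟨by omega⟩
  haveI : NeZero (2*n) := ⟨by omega⟩
  have hneα : Nonempty α := (Nat.card_pos_iff.mp (by omega)).1
  intro S hS
  obtain ⟨hScut, hScard⟩ := hS
  have hvle : (tildeG G X Y n).vConn ≤ 2 * G.minDeg := tg_vConn_le hn hbip hneα hcard
  have hS2δ : S.ncard ≤ 2 * G.minDeg := by rw [hScard]; exact hvle
  by_cases hisol : ∃ a, a ∉ S ∧ ∀ b, (tildeG G X Y n).Adj a b → b ∈ S
  · -- the cut is the neighbourhood of an isolated vertex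
    obtain ⟨a, haS, haiso⟩ := hisol
    set N := (tildeG G X Y n).neighborSet a with hN
    have hNS : N ⊆ S := fun b hb => haiso b hb
    have hNlow : 2 * G.minDeg ≤ N.ncard := tg_deg_lower hn hbip a
    have hEq : N = S := Set.eq_of_subset_of_ncard_le hNS (by omega) (Set.toFinite _)
    have hNcard : N.ncard = 2 * G.minDeg := by
      have : S.ncard = N.ncard := by rw [hEq]
      omega
    refine ⟨a, ?_, hEq.symm⟩
    have h1 : (tildeG G X Y n).minDeg ≤ N.ncard := aux_minDeg_le a
    haveI : Nonempty (α × ZMod n) := ⟨a⟩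
    obtain ⟨b₀, hb₀⟩ := aux_minDeg_attained (H := tildeG G X Y n)
    have h2 : 2 * G.minDeg ≤ (tildeG G X Y n).minDeg := by
      rw [← hb₀]; exact tg_deg_lower hn hbip b₀
    rw [← hN]
    omega
  · -- otherwise: derive a contradiction
    exfalso
    push_neg at hisol
    set G' := (tildeG G X Y n).induce Sᶜ with hG'
    have hSc_ne : Sᶜ.Nonempty := by
      by_contra h
      rw [Set.not_nonempty_iff_eq_empty, Set.compl_empty_iff] at h
      have h1 : S.ncard = Nat.card α * n := by
        rw [h, Set.ncard_univ, Nat.card_prod, Nat.card_zmod]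
      have h2 : (2 * G.minDeg + 2) * 3 ≤ Nat.card α * n := by
        calc (2 * G.minDeg + 2) * 3 ≤ Nat.card α * 3 := Nat.mul_le_mul_right 3 hcard
          _ ≤ Nat.card α * n := Nat.mul_le_mul_left _ hn
      omega
    obtain ⟨z₀, hz₀⟩ := hSc_ne
    have hex : ∃ u v : ↥Sᶜ, ¬ G'.Reachable u v := by
      by_contra h
      push_neg at h
      exact hScut ((SimpleGraph.connected_iff _).mpr ⟨h, ⟨⟨z₀, hz₀⟩⟩⟩)
    obtain ⟨u, v, hne⟩ := hex
    set s : ZMod (2*n) → ℕ := tgs (Y := Y) S with hsdef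
    set δ := G.minDeg with hδdef
    set κ := G.vConn with hκdef
    -- reachable classes from a basepoint
    set J : ↥Sᶜ → ZMod (2*n) → Prop := fun u c =>
      ∃ w : ↥Sᶜ, (w : α × ZMod n) ∈ tgC Y n c ∧ G'.Reachable u w with hJdef
    have hJ0 : ∀ w : ↥Sᶜ, J w (tgcls Y n (w : α × ZMod n)) :=
      fun w => ⟨w, rfl, SimpleGraph.Reachable.refl w⟩
    have hJsucc : ∀ (z : ↥Sᶜ) c, J z c → ¬ J z (c+1) → δ ≤ s (c+1) := by
      rintro z c ⟨w, hwC, hwR⟩ hnot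
      apply tg_boundary_succ hn hbip hwC
      intro u' hadj
      by_contra hus
      have hmemC := tgphi_opp_succ hn hbip hwC hadj
      have hadj2 : G'.Adj w ⟨tgphi Y n c u', hus⟩ :=
        tg_copy_adj_succ (G := G) hn hbip hwC hadj
      exact hnot ⟨⟨tgphi Y n c u', hus⟩, hmemC, hwR.trans hadj2.reachable⟩
    have hJpred : ∀ (z : ↥Sᶜ) c, J z c → ¬ J z (c-1) → δ ≤ s (c-1) := by
      rintro z c ⟨w, hwC, hwR⟩ hnot
      apply tg_boundary_pred hn hbip hwC
      intro u' hadj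
      by_contra hus
      have hwC' : (w : α × ZMod n) ∈ tgC Y n ((c-1)+1) := by
        rw [sub_add_cancel]; exact hwC
      have hmemC := tgphi_opp_pred hn hbip hwC' hadj
      have hadj2 : G'.Adj w ⟨tgphi Y n (c-1) u', hus⟩ :=
        tg_copy_adj_pred (G := G) hn hbip hwC hadj
      exact hnot ⟨⟨tgphi Y n (c-1) u', hus⟩, hmemC, hwR.trans hadj2.reachable⟩
    have hW : ∀ (z : ↥Sᶜ) c, ¬ J z c →
        δ ≤ s c ∨ ∃ e₁ e₂, e₁ ≠ e₂ ∧ δ ≤ s e₁ ∧ δ ≤ s e₂ :=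
      fun z c h => cycle_walk (by omega) (J z) δ s (hJ0 z) (hJsucc z) (hJpred z) h
    have hbad : ∀ j, J u j → J v j → κ ≤ s j + s (j+1) := by
      rintro j ⟨wu, hwuC, hwuR⟩ ⟨wv, hwvC, hwvR⟩
      by_contra hlt
      push_neg at hlt
      have hgb := tg_good_block hn hbip hlt (Or.inl hwuC) (Or.inl hwvC) wu.2 wv.2
      exact hne (hwuR.trans (hgb.trans hwvR.symm))
    have hsum : ∑ c : ZMod (2*n), s c = S.ncard := tgs_sum hn S
    have hshift : ∑ j : ZMod (2*n), s (j+1) = S.ncard := by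
      rw [← hsum]
      exact Fintype.sum_equiv (Equiv.addRight (1 : ZMod (2*n))) _ _ (fun j => rfl)
    have hcard2n : (Finset.univ : Finset (ZMod (2*n))).card = 2*n := by
      rw [Finset.card_univ]; exact ZMod.card (2*n)
    have hkp : 2*δ < n * κ := hk
    by_cases hD0 : ∀ c, s c < δ
    · -- no heavy class : everything is reachable, all blocks are bad
      have hJall : ∀ (w : ↥Sᶜ) c, J w c := by
        intro w c
        by_contra hcJ
        rcases hW w c hcJ with h | ⟨e₁, e₂, _, h₁, _⟩
        · exact absurd h (not_le.mpr (hD0 c))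
        · exact absurd h₁ (not_le.mpr (hD0 e₁))
      have h1 : (2*n) * κ ≤ ∑ j : ZMod (2*n), (s j + s (j+1)) := by
        have := Finset.card_nsmul_le_sum Finset.univ (fun j => s j + s (j+1)) κ
          (fun j _ => hbad j (hJall u j) (hJall v j))
        rwa [hcard2n, smul_eq_mul] at this
      rw [Finset.sum_add_distrib, hsum, hshift] at h1
      have h2 : 2*n*κ = 2*(n*κ) := by ring
      omega
    · push_neg at hD0
      obtain ⟨c₀, hc₀⟩ := hD0
      by_cases hD2 : ∃ c', c' ≠ c₀ ∧ δ ≤ s c'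
      · -- two heavy classes
        obtain ⟨c', hc'ne, hc'⟩ := hD2
        have hpair : s c₀ + s c' ≤ S.ncard := by
          rw [← hsum, ← Finset.sum_pair (Ne.symm hc'ne)]
          exact Finset.sum_le_sum_of_subset (Finset.subset_univ _)
        have hrest : ∀ c, c ≠ c₀ → c ≠ c' → s c = 0 := by
          intro c h1 h2
          have e1 : ∑ j ∈ Finset.univ.erase c₀, s j + s c₀ = S.ncard := by
            rw [Finset.sum_erase_add _ _ (Finset.mem_univ c₀)]; exact hsum
          have hc'mem : c' ∈ Finset.univ.erase c₀ :=
            Finset.mem_erase.mpr ⟨hc'ne, Finset.mem_univ c'⟩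
          have e2 : ∑ j ∈ (Finset.univ.erase c₀).erase c', s j + s c' =
              ∑ j ∈ Finset.univ.erase c₀, s j :=
            Finset.sum_erase_add _ _ hc'mem
          have e3 : ∑ j ∈ (Finset.univ.erase c₀).erase c', s j = 0 := by omega
          have hcmem : c ∈ (Finset.univ.erase c₀).erase c' :=
            Finset.mem_erase.mpr ⟨h2, Finset.mem_erase.mpr ⟨h1, Finset.mem_univ c⟩⟩
          exact (Finset.sum_eq_zero_iff.mp e3) c hcmem
        have hs1b : s c₀ ≤ δ := by omega
        have hs2b : s c' ≤ δ := by omega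
        have hvalsum : (c' - c₀).val + (c₀ - c').val = 2*n := by
          have hZ : (c' - c₀) + (c₀ - c') = 0 := by ring
          have hv := ZMod.val_add (c' - c₀) (c₀ - c')
          rw [hZ, ZMod.val_zero] at hv
          have hne0 : (c' - c₀) ≠ 0 := sub_ne_zero.mpr hc'ne
          have hv1 : (c' - c₀).val ≠ 0 := fun h => hne0 ((ZMod.val_eq_zero _).mp h)
          have l1 : (c' - c₀).val < 2*n := (c' - c₀).val_lt
          have l2 : (c₀ - c').val < 2*n := (c₀ - c').val_lt
          have hdvd := Nat.dvd_of_mod_eq_zero hv.symm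
          rcases hdvd with ⟨q, hq⟩
          match q, hq with
          | 0, hq => omega
          | 1, hq => omega
          | (q+2), hq =>
            have : (2*n) * (q+2) = 2*n*q + 2*n*2 := by ring
            omega
        have hd1 : 1 ≤ (c' - c₀).val := by
          have hne0 : (c' - c₀) ≠ 0 := sub_ne_zero.mpr hc'ne
          exact Nat.one_le_iff_ne_zero.mpr (fun h => hne0 ((ZMod.val_eq_zero _).mp h))
        have hl1 : (c' - c₀).val < 2*n := (c' - c₀).val_lt
        rcases le_or_gt ((c' - c₀).val) n with hdd | hdd
        · exact tg_B2 hn hbip hX hY hκ1 hδ1 hScut hisol c₀ c' hd1 hdd hrest hs1b hs2b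
        · have hd1' : 1 ≤ (c₀ - c').val := by omega
          have hdd' : (c₀ - c').val ≤ n := by omega
          exact tg_B2 hn hbip hX hY hκ1 hδ1 hScut hisol c' c₀ hd1' hdd'
            (fun c h1 h2 => hrest c h2 h1) hs2b hs1b
      · -- exactly one heavy class
        push_neg at hD2
        have hD2' : ∀ c, c ≠ c₀ → s c < δ := by
          intro c hc
          by_contra h
          push_neg at h
          exact absurd h (not_le.mpr (hD2 c hc))
        have hJall : ∀ (w : ↥Sᶜ) c, c ≠ c₀ → J w c := by
          intro w c hcc₀
          by_contra hcJ
          rcases hW w c hcJ with h | ⟨e₁, e₂, hee, h₁, h₂⟩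
          · exact absurd h (not_le.mpr (hD2' c hcc₀))
          · have he₁ : e₁ = c₀ := by
              by_contra hh; exact absurd h₁ (not_le.mpr (hD2' e₁ hh))
            have he₂ : e₂ = c₀ := by
              by_contra hh; exact absurd h₂ (not_le.mpr (hD2' e₂ hh))
            exact hee (he₁.trans he₂.symm)
        have hbadE : ∀ j ∈ Finset.univ.erase c₀, κ ≤ s j + s (j+1) := by
          intro j hj
          have hjne : j ≠ c₀ := (Finset.mem_erase.mp hj).1
          exact hbad j (hJall u j hjne) (hJall v j hjne)
        have h1 : (2*n - 1) * κ ≤ ∑ j ∈ Finset.univ.erase c₀, (s j + s (j+1)) := by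
          have := Finset.card_nsmul_le_sum _ _ κ hbadE
          rwa [Finset.card_erase_of_mem (Finset.mem_univ c₀), hcard2n,
            smul_eq_mul] at this
        rw [Finset.sum_add_distrib] at h1
        have h3 : ∑ j ∈ Finset.univ.erase c₀, s j + s c₀ = S.ncard := by
          rw [Finset.sum_erase_add _ _ (Finset.mem_univ c₀)]; exact hsum
        have h4 : ∑ j ∈ Finset.univ.erase c₀, s (j+1) ≤ S.ncard := by
          rw [← hshift]
          exact Finset.sum_le_sum_of_subset (Finset.subset_univ _)
        have h5 : (2*n-1)*κ + κ = 2*(n*κ) := by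
          have h6 : (2*n-1) + 1 = 2*n := by omega
          calc (2*n-1)*κ + κ = ((2*n-1)+1)*κ := by ring
            _ = 2*n*κ := by rw [h6]
            _ = 2*(n*κ) := by ring
        omega
end

section
/- Let G be a connected bipartite graph and n ≥ 3 an odd integer. Then κ(G × C_n) = min{n·κ(G), 2·δ(G)}. -/
open SimpleGraph

universe u v

variable {α : Type u} {β : Type v}

namespace StmtAux


variable {V : Type*}

/-- One step of adjacency avoiding `S`. -/
structure Stp (H : SimpleGraph V) (S : Set V) (a b : V) : Prop where
  adj : H.Adj a b
  ha : a ∉ S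
  hb : b ∉ S

/-- Reachability avoiding `S`. -/
def Rel (H : SimpleGraph V) (S : Set V) (a b : V) : Prop :=
  Relation.ReflTransGen (Stp H S) a b

lemma Stp.symm {H : SimpleGraph V} {S : Set V} {a b : V} (h : Stp H S a b) : Stp H S b a :=
  ⟨h.adj.symm, h.hb, h.ha⟩

lemma Rel.symm {H : SimpleGraph V} {S : Set V} {a b : V} (h : Rel H S a b) : Rel H S b a :=
  (@Relation.ReflTransGen.stdSymm _ _ ⟨fun _ _ h => Stp.symm h⟩).symm _ _ h

lemma Rel.trans {H : SimpleGraph V} {S : Set V} {a b c : V} (h : Rel H S a b)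
    (h' : Rel H S b c) : Rel H S a c := Relation.ReflTransGen.trans h h'

lemma reachable_of_rel {H : SimpleGraph V} {S : Set V} {a b : V} (h : Rel H S a b) :
    ∀ (ha : a ∈ Sᶜ) (hb : b ∈ Sᶜ), (H.induce Sᶜ).Reachable ⟨a, ha⟩ ⟨b, hb⟩ := by
  induction h with
  | refl => exact fun ha hb => Reachable.refl _
  | tail hab hbc ih =>
    intro ha hc
    exact (ih ha hbc.ha).trans (SimpleGraph.Adj.reachable (by exact hbc.adj))

lemma rel_of_reachable {H : SimpleGraph V} {S : Set V} {a b : ↥(Sᶜ)}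
    (h : (H.induce Sᶜ).Reachable a b) : Rel H S a.1 b.1 := by
  obtain ⟨w⟩ := h
  induction w with
  | nil => exact Relation.ReflTransGen.refl
  | cons h p ih =>
    exact Relation.ReflTransGen.head ⟨h, by exact Set.notMem_of_mem_compl (Subtype.coe_prop _), by exact Set.notMem_of_mem_compl (Subtype.coe_prop _)⟩ ih

lemma isVertexCut_of_not_rel {H : SimpleGraph V} {S : Set V} {a b : V}
    (ha : a ∉ S) (hb : b ∉ S) (h : ¬ Rel H S a b) : H.IsVertexCut S := by
  intro hc
  exact h (rel_of_reachable (hc.preconnected ⟨a, ha⟩ ⟨b, hb⟩))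

lemma rel_of_connected {H : SimpleGraph V} {S : Set V} {a b : V}
    (hc : (H.induce Sᶜ).Connected) (ha : a ∉ S) (hb : b ∉ S) : Rel H S a b :=
  rel_of_reachable (hc.preconnected ⟨a, ha⟩ ⟨b, hb⟩)

lemma connected_of_rel {H : SimpleGraph V} {S : Set V} (hne : ∃ a, a ∉ S)
    (h : ∀ a b, a ∉ S → b ∉ S → Rel H S a b) : (H.induce Sᶜ).Connected := by
  obtain ⟨a, ha⟩ := hne
  haveI : Nonempty ↥(Sᶜ) := ⟨⟨a, ha⟩⟩
  exact ⟨fun x y => reachable_of_rel (h x.1 y.1 x.2 y.2) x.2 y.2⟩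


variable {V : Type*} {H : SimpleGraph V}

lemma vConn_le_of_cut {S : Set V} (h : H.IsVertexCut S) : H.vConn ≤ S.ncard :=
  Nat.sInf_le ⟨S, rfl, Or.inl h⟩

lemma isVertexCut_univ : H.IsVertexCut Set.univ := by
  intro hc
  obtain ⟨x⟩ := hc.nonempty
  simpa using x.2

lemma vConn_set_nonempty :
    {n | ∃ S : Set V, S.ncard = n ∧ (H.IsVertexCut S ∨ Nat.card V ≤ n + 1)}.Nonempty :=
  ⟨_, Set.univ, rfl, Or.inl isVertexCut_univ⟩

lemma not_cut_of_lt {S : Set V} (h : S.ncard < H.vConn) : ¬ H.IsVertexCut S := fun hc => by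
  have h2 := vConn_le_of_cut hc
  omega

lemma card_gt_of_lt {S : Set V} (h : S.ncard < H.vConn) : S.ncard + 1 < Nat.card V := by
  by_contra hle
  have h2 : H.vConn ≤ S.ncard := Nat.sInf_le ⟨S, rfl, Or.inr (by omega)⟩
  omega

lemma rel_of_lt {S : Set V} (h : S.ncard < H.vConn) {a b : V} (ha : a ∉ S) (hb : b ∉ S) :
    Rel H S a b :=
  rel_of_connected (not_not.1 (not_cut_of_lt h)) ha hb

lemma minDeg_le (v : V) : H.minDeg ≤ (H.neighborSet v).ncard :=
  Nat.sInf_le ⟨v, rfl⟩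

lemma exists_minDeg [Nonempty V] : ∃ v : V, (H.neighborSet v).ncard = H.minDeg :=
  Nat.sInf_mem (⟨_, Classical.arbitrary V, rfl⟩ :
    {d | ∃ v, (H.neighborSet v).ncard = d}.Nonempty)

lemma vConn_le_minDeg [Finite V] [Nonempty V] : H.vConn ≤ H.minDeg := by
  obtain ⟨v, hv⟩ := exists_minDeg (H := H)
  rw [← hv]
  by_cases hw : ∃ w, w ≠ v ∧ w ∉ H.neighborSet v
  · obtain ⟨w, hwv, hwS⟩ := hw
    refine vConn_le_of_cut (fun hc => ?_)
    have hrel : Rel H (H.neighborSet v) v w :=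
      rel_of_connected hc (fun h => H.loopless.irrefl v h) hwS
    rcases (Relation.ReflTransGen.cases_head hrel) with h | ⟨u, hu, _⟩
    · exact hwv h.symm
    · exact hu.hb hu.adj
  · push_neg at hw
    refine Nat.sInf_le ⟨H.neighborSet v, rfl, Or.inr ?_⟩
    have hsub : (Set.univ : Set V) ⊆ H.neighborSet v ∪ {v} := by
      intro x _
      rcases eq_or_ne x v with rfl | hx
      · exact Or.inr rfl
      · exact Or.inl (hw x hx)
    calc Nat.card V = (Set.univ : Set V).ncard := (Set.ncard_univ V).symm
      _ ≤ (H.neighborSet v ∪ {v}).ncard := Set.ncard_le_ncard hsub (Set.toFinite _)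
      _ ≤ (H.neighborSet v).ncard + ({v} : Set V).ncard := Set.ncard_union_le _ _
      _ = (H.neighborSet v).ncard + 1 := by rw [Set.ncard_singleton]

lemma vConn_le_card [Finite V] [Nonempty V] : H.vConn ≤ Nat.card V - 1 := by
  obtain ⟨v⟩ := ‹Nonempty V›
  have hcard : ({v}ᶜ : Set V).ncard = Nat.card V - 1 := by
    have := Set.ncard_add_ncard_compl ({v} : Set V)
    rw [Set.ncard_singleton] at this
    omega
  have hpos : 0 < Nat.card V := Nat.card_pos
  exact hcard ▸ Nat.sInf_le ⟨({v}ᶜ : Set V), rfl, Or.inr (by omega)⟩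



def iFin {n : ℕ} : Fin n → ZMod n := fun i => (i.1 : ZMod n)

lemma iFin_sub {n : ℕ} (u v : Fin n) : iFin (u - v) = iFin u - iFin v := by
  unfold iFin
  rw [Fin.sub_def]
  simp only [ZMod.natCast_mod, Nat.cast_add]
  rw [Nat.cast_sub (le_of_lt v.isLt)]
  simp [ZMod.natCast_self]
  ring

lemma iFin_inj {n : ℕ} [NeZero n] : Function.Injective (iFin (n := n)) := by
  intro a b h
  have h2 : (iFin a).val = (iFin b).val := by rw [h]
  unfold iFin at h2
  rw [ZMod.val_cast_of_lt a.isLt, ZMod.val_cast_of_lt b.isLt] at h2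
  exact Fin.ext h2

def finOf {n : ℕ} [NeZero n] : ZMod n → Fin n := fun x => ⟨x.val, ZMod.val_lt x⟩

lemma iFin_finOf {n : ℕ} [NeZero n] (x : ZMod n) : iFin (finOf x) = x := by
  unfold iFin finOf
  exact ZMod.natCast_rightInverse x

lemma finOf_iFin {n : ℕ} [NeZero n] (i : Fin n) : finOf (iFin i) = i :=
  iFin_inj (iFin_finOf _)

lemma cycle_adj_iff {n : ℕ} (hn : 3 ≤ n) {u v : Fin n} :
    (cycleGraph n).Adj u v ↔ (iFin u - iFin v = 1 ∨ iFin v - iFin u = 1) := by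
  haveI : Fact (1 < n) := ⟨by omega⟩
  rw [cycleGraph_adj']
  have key : ∀ a b : Fin n, ((a - b).val = 1 ↔ iFin a - iFin b = 1) := by
    intro a b
    constructor
    · intro h
      rw [← iFin_sub]
      unfold iFin
      rw [h]
      exact Nat.cast_one
    · intro h
      rw [← iFin_sub] at h
      have : ((a-b).val : ZMod n).val = (1 : ZMod n).val := by
        unfold iFin at h; rw [h]
      rwa [ZMod.val_cast_of_lt (a-b).isLt, ZMod.val_one n] at this
  rw [key, key]

/-! ### The level map -/

section Z

variable {G : SimpleGraph α} {n : ℕ}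

/-- The CRT isomorphism. -/
noncomputable def zE (n : ℕ) (h2 : Nat.Coprime 2 n) : ZMod (2*n) ≃+* ZMod 2 × ZMod n :=
  ZMod.chineseRemainder h2

/-- The color of a vertex as an element of `ZMod 2`. -/
def c2 (Col : G.Coloring (Fin 2)) : α → ZMod 2 := fun a => ((Col a).1 : ZMod 2)

/-- The level of a vertex of the tensor product. -/
noncomputable def zf (Col : G.Coloring (Fin 2)) (h2 : Nat.Coprime 2 n) :
    α × Fin n → ZMod (2*n) := fun v => (zE n h2).symm (c2 Col v.1, iFin v.2)

variable (Col : G.Coloring (Fin 2)) (h2 : Nat.Coprime 2 n)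

lemma c2_adj {a b : α} (hab : G.Adj a b) : c2 Col b = c2 Col a + 1 := by
  have hne : Col a ≠ Col b := Col.valid hab
  have key : ∀ x y : Fin 2, x ≠ y → ((y.1 : ZMod 2) = (x.1 : ZMod 2) + 1) := by decide
  exact key _ _ hne

lemma zf_sub_of_adj {v w : α × Fin n} (hvw : G.Adj v.1 w.1) :
    zf Col h2 w - zf Col h2 v = (zE n h2).symm (1, iFin w.2 - iFin v.2) := by
  unfold zf
  rw [← map_sub]
  congr 1
  rw [Prod.mk_sub_mk, c2_adj Col hvw]
  simp

lemma zE_symm_one : (zE n h2).symm (1, 1) = 1 := by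
  have : ((1, 1) : ZMod 2 × ZMod n) = 1 := rfl
  rw [this, map_one]

lemma zE_symm_neg_one : (zE n h2).symm (1, -1) = -1 := by
  have : ((1, -1) : ZMod 2 × ZMod n) = -1 := by
    have h1 : (-1 : ZMod 2) = 1 := by decide
    rw [show (-1 : ZMod 2 × ZMod n) = (-1, -1) from rfl, h1]
  rw [this, map_neg, map_one]

lemma zf_step (hn : 3 ≤ n) {v w : α × Fin n}
    (hvw : (G.tensorProd (cycleGraph n)).Adj v w) :
    zf Col h2 w = zf Col h2 v + 1 ∨ zf Col h2 w = zf Col h2 v - 1 := by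
  obtain ⟨hG, hC⟩ := hvw
  have hsub := zf_sub_of_adj Col h2 hG
  rcases (cycle_adj_iff hn).1 hC with h | h
  · right
    have hd : iFin w.2 - iFin v.2 = -1 := by
      rw [← neg_sub (iFin v.2) (iFin w.2), h]
    rw [hd, zE_symm_neg_one] at hsub
    rw [sub_eq_iff_eq_add] at hsub
    rw [hsub]
    ring
  · left
    rw [h, zE_symm_one] at hsub
    rw [sub_eq_iff_eq_add] at hsub
    rw [hsub]
    ring

lemma adj_of_zf (hn : 3 ≤ n) {v w : α × Fin n} (hG : G.Adj v.1 w.1)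
    (hz : zf Col h2 w = zf Col h2 v + 1 ∨ zf Col h2 w = zf Col h2 v - 1) :
    (G.tensorProd (cycleGraph n)).Adj v w := by
  refine ⟨hG, ?_⟩
  rw [cycle_adj_iff hn]
  have hsub := zf_sub_of_adj Col h2 hG
  rcases hz with h | h
  · right
    have h1 : (zE n h2).symm (1, iFin w.2 - iFin v.2) = (zE n h2).symm (1, 1) := by
      rw [← hsub, zE_symm_one, h]; ring
    have := (zE n h2).symm.injective h1
    exact (Prod.mk.injEq _ _ _ _ ▸ this).2
  · left
    have h1 : (zE n h2).symm (1, iFin w.2 - iFin v.2) = (zE n h2).symm (1, -1) := by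
      rw [← hsub, zE_symm_neg_one, h]; ring
    have := (zE n h2).symm.injective h1
    have h3 : iFin w.2 - iFin v.2 = -1 := (Prod.mk.injEq _ _ _ _ ▸ this).2
    rw [← neg_sub (iFin w.2) (iFin v.2), h3]; norm_num

/-- Parity component of a level. -/
noncomputable def par (h2 : Nat.Coprime 2 n) (x : ZMod (2*n)) : ZMod 2 := ((zE n h2) x).1

/-- Cycle component of a level. -/
noncomputable def idx (h2 : Nat.Coprime 2 n) (x : ZMod (2*n)) : ZMod n := ((zE n h2) x).2

lemma par_zf (v : α × Fin n) : par h2 (zf Col h2 v) = c2 Col v.1 := by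
  unfold par zf
  rw [RingEquiv.apply_symm_apply]

lemma idx_zf (v : α × Fin n) : idx h2 (zf Col h2 v) = iFin v.2 := by
  unfold idx zf
  rw [RingEquiv.apply_symm_apply]

lemma par_sub_one (k : ZMod (2*n)) : par h2 (k - 1) = par h2 k - 1 := by
  unfold par
  rw [map_sub, map_one]
  rfl

/-- The level in `{k-1, k}` with the parity of `u`. -/
noncomputable def kstar (Col : G.Coloring (Fin 2)) (h2 : Nat.Coprime 2 n)
    (k : ZMod (2*n)) (u : α) : ZMod (2*n) :=
  if par h2 k = c2 Col u then k else k - 1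

/-- The canonical embedding of `G` onto the `k`-th copy in the tensor product. -/
noncomputable def psi [NeZero n] (Col : G.Coloring (Fin 2)) (h2 : Nat.Coprime 2 n)
    (k : ZMod (2*n)) (u : α) : α × Fin n :=
  (u, finOf (idx h2 (kstar Col h2 k u)))

lemma zmod2_cases (a b : ZMod 2) (h : a ≠ b) : b = a - 1 := by revert a b; decide

lemma par_kstar (k : ZMod (2*n)) (u : α) : par h2 (kstar Col h2 k u) = c2 Col u := by
  unfold kstar
  split_ifs with h
  · exact h
  · rw [par_sub_one]
    exact (zmod2_cases _ _ h).symm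

lemma kstar_mem (k : ZMod (2*n)) (u : α) :
    kstar Col h2 k u = k ∨ kstar Col h2 k u = k - 1 := by
  unfold kstar
  split_ifs <;> simp

lemma zf_psi [NeZero n] (k : ZMod (2*n)) (u : α) :
    zf Col h2 (psi Col h2 k u) = kstar Col h2 k u := by
  unfold zf psi
  simp only [iFin_finOf]
  have : (c2 Col u, idx h2 (kstar Col h2 k u))
      = (zE n h2) (kstar Col h2 k u) := by
    rw [← par_kstar Col h2 k u]
    rfl
  rw [this, RingEquiv.symm_apply_apply]

lemma psi_eq_self [NeZero n] (k : ZMod (2*n)) (a : α × Fin n)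
    (ha : zf Col h2 a = k ∨ zf Col h2 a = k - 1) : psi Col h2 k a.1 = a := by
  have hk : kstar Col h2 k a.1 = zf Col h2 a := by
    unfold kstar
    rcases ha with h | h
    · rw [if_pos (by rw [← h, par_zf]), h]
    · have hca : c2 Col a.1 = par h2 k - 1 := by
        rw [← par_zf Col h2 a, h, par_sub_one]
      have hnc : ¬ par h2 k = c2 Col a.1 := by
        rw [hca]
        intro hc
        have h4 : (1 : ZMod 2) ≠ 0 := by decide
        exact h4 (sub_eq_self.1 hc.symm)
      rw [if_neg hnc, h]
  unfold psi
  rw [hk, idx_zf]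
  exact Prod.ext rfl (finOf_iFin _)

lemma psi_fst [NeZero n] (k : ZMod (2*n)) (u : α) : (psi Col h2 k u).1 = u := rfl

lemma psi_inj [NeZero n] (k : ZMod (2*n)) : Function.Injective (psi Col h2 k) :=
  fun a b h => congrArg Prod.fst h

lemma psi_adj [NeZero n] (hn : 3 ≤ n) (k : ZMod (2*n)) {a b : α} (hab : G.Adj a b) :
    (G.tensorProd (cycleGraph n)).Adj (psi Col h2 k a) (psi Col h2 k b) := by
  apply adj_of_zf Col h2 hn (by exact hab)
  rw [zf_psi, zf_psi]
  have hne : par h2 (kstar Col h2 k a) ≠ par h2 (kstar Col h2 k b) := by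
    rw [par_kstar, par_kstar, c2_adj Col hab]
    intro hcon
    have h1 : (1 : ZMod 2) = 0 := left_eq_add.1 hcon
    exact absurd h1 (by decide)
  rcases kstar_mem Col h2 k a with ha | ha <;> rcases kstar_mem Col h2 k b with hb | hb
  · exact absurd (by rw [ha, hb] : par h2 (kstar Col h2 k a) = par h2 (kstar Col h2 k b)) hne
  · right; rw [ha, hb]
  · left; rw [ha, hb]; ring
  · exact absurd (by rw [ha, hb] : par h2 (kstar Col h2 k a) = par h2 (kstar Col h2 k b)) hne

lemma adj_of_psi_adj {k : ZMod (2*n)} [NeZero n] {a b : α}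
    (h : (G.tensorProd (cycleGraph n)).Adj (psi Col h2 k a) (psi Col h2 k b)) :
    G.Adj a b := h.1

/-- The two "half-neighborhoods" of a vertex are copies of its neighborhood in `G`. -/
lemma nside_bij [NeZero n] (hn : 3 ≤ n) (v : α × Fin n) (ε : ZMod (2*n)) (s : ZMod n)
    (hs : (zE n h2).symm (1, s) = ε) (hε : ε = 1 ∨ ε = -1) :
    Set.BijOn (fun u => (u, finOf (iFin v.2 + s)))
      (G.neighborSet v.1) {w | (G.tensorProd (cycleGraph n)).Adj v w ∧
        zf Col h2 w = zf Col h2 v + ε} := by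
  have hz : ∀ u : α, G.Adj v.1 u →
      zf Col h2 (u, finOf (iFin v.2 + s)) = zf Col h2 v + ε := by
    intro u hu
    have hG : G.Adj v.1 (u, finOf (iFin v.2 + s)).1 := hu
    have := zf_sub_of_adj Col h2 hG
    rw [sub_eq_iff_eq_add] at this
    rw [this]
    simp only [iFin_finOf]
    rw [show iFin v.2 + s - iFin v.2 = s by ring, hs]
    ring
  refine ⟨?_, ?_, ?_⟩
  · intro u hu
    have hu' : G.Adj v.1 u := hu
    exact ⟨adj_of_zf Col h2 hn hu' (by rw [hz u hu']; rcases hε with h|h <;> [left; right] <;>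
      rw [h] <;> ring), hz u hu'⟩
  · intro a _ b _ h
    exact congrArg Prod.fst h
  · intro w hw
    obtain ⟨hadj, hzw⟩ := hw
    refine ⟨w.1, hadj.1, ?_⟩
    have hidx : iFin w.2 = iFin v.2 + s := by
      have h6 : idx h2 (zf Col h2 w) = idx h2 (zf Col h2 v) + s := by
        unfold idx
        rw [hzw, ← hs, map_add, RingEquiv.apply_symm_apply]
        rfl
      rwa [idx_zf, idx_zf] at h6
    have : finOf (iFin v.2 + s) = w.2 := by rw [← hidx, finOf_iFin]
    exact Prod.ext rfl this

end Z


section Cyclic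

variable {m : ℕ} [NeZero m]

lemma zmod_closed_succ {M : Set (ZMod m)} (h : ∀ x ∈ M, x + 1 ∈ M) {a : ZMod m} (ha : a ∈ M) :
    ∀ t, t ∈ M := by
  have key : ∀ k : ℕ, a + (k : ZMod m) ∈ M := by
    intro k
    induction k with
    | zero => simpa using ha
    | succ k ih =>
      have := h _ ih
      push_cast
      rwa [add_assoc] at this
  intro t
  have := key (t - a).val
  rwa [ZMod.natCast_rightInverse _, add_sub_cancel] at this

lemma zmod_closed_pred {M : Set (ZMod m)} (h : ∀ x ∈ M, x - 1 ∈ M) {a : ZMod m} (ha : a ∈ M) :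
    ∀ t, t ∈ M := by
  have key : ∀ k : ℕ, a - (k : ZMod m) ∈ M := by
    intro k
    induction k with
    | zero => simpa using ha
    | succ k ih =>
      have := h _ ih
      push_cast
      rwa [sub_sub] at this
  intro t
  have := key (a - t).val
  rwa [ZMod.natCast_rightInverse _, sub_sub_cancel] at this

lemma zmod_rise_fall {M : Set (ZMod m)} (hne : M ≠ Set.univ)
    (hcard : ∃ e₁ ∈ M, ∃ e₂ ∈ M, e₁ ≠ e₂) :
    ∃ c ∈ M, ∃ d ∈ M, c ≠ d ∧ c - 1 ∉ M ∧ d + 1 ∉ M := by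
  obtain ⟨e₁, he₁, e₂, he₂, hee⟩ := hcard
  have hrise : ∃ c ∈ M, c - 1 ∉ M := by
    by_contra hcon
    push_neg at hcon
    exact hne (Set.eq_univ_of_forall (zmod_closed_pred hcon he₁))
  obtain ⟨c, hc, hcrise⟩ := hrise
  by_cases hD : ∃ d ∈ M, d + 1 ∉ M ∧ d ≠ c
  · obtain ⟨d, hd, hdfall, hdc⟩ := hD
    exact ⟨c, hc, d, hd, fun h => hdc h.symm, hcrise, hdfall⟩
  · push_neg at hD
    exfalso
    -- every fall equals c; walk from some e ≠ c forever inside M \ {c}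
    obtain ⟨e, he, hec⟩ : ∃ e ∈ M, e ≠ c := by
      rcases eq_or_ne e₁ c with rfl | h1
      · exact ⟨e₂, he₂, fun h => hee h.symm⟩
      · exact ⟨e₁, he₁, h1⟩
    have key : ∀ k : ℕ, e + (k : ZMod m) ∈ M ∧ e + (k : ZMod m) ≠ c := by
      intro k
      induction k with
      | zero => exact ⟨by simpa using he, by simpa using hec⟩
      | succ k ih =>
        obtain ⟨hx, hxc⟩ := ih
        set x := e + (k : ZMod m) with hxdef
        have hx1 : x + 1 ∈ M := by
          by_contra hcon
          exact hxc (hD x hx hcon)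
        have hx1c : x + 1 ≠ c := by
          intro hcon
          have : c - 1 = x := by rw [← hcon]; ring
          exact hcrise (this ▸ hx)
        constructor
        · push_cast
          rwa [← add_assoc]
        · push_cast
          rwa [← add_assoc]
    have := key (c - e).val
    rw [ZMod.natCast_rightInverse _, add_sub_cancel] at this
    exact this.2 rfl

end Cyclic

section Count

lemma sum_fiber_ncard {V : Type*} [Fintype V] {m : ℕ} [NeZero m] (f : V → ZMod m) (S : Set V) :
    ∑ k : ZMod m, (S ∩ f ⁻¹' {k}).ncard = S.ncard := by
  classical
  have h1 : ∀ k : ZMod m, (S ∩ f ⁻¹' {k}).ncard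
      = (S.toFinset.filter (fun v => f v = k)).card := by
    intro k
    rw [Set.ncard_eq_toFinset_card']
    congr 1
    ext v
    simp [Set.mem_toFinset]
  simp only [h1]
  rw [← Finset.card_eq_sum_card_fiberwise (fun v _ => Finset.mem_univ (f v))]
  rw [Set.ncard_eq_toFinset_card']

lemma sum_shift {m : ℕ} [NeZero m] (g : ZMod m → ℕ) :
    ∑ k : ZMod m, g (k - 1) = ∑ k : ZMod m, g k :=
  Fintype.sum_bijective (Equiv.subRight (1 : ZMod m)) (Equiv.bijective _) _ _ (fun k => rfl)

lemma sum_pair_ncard {V : Type*} [Fintype V] {m : ℕ} [NeZero m] (hm : (1 : ZMod m) ≠ 0)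
    (f : V → ZMod m) (S : Set V) :
    ∑ k : ZMod m, (S ∩ f ⁻¹' {k - 1, k}).ncard = 2 * S.ncard := by
  have hsplit : ∀ k : ZMod m, (S ∩ f ⁻¹' {k - 1, k}).ncard
      = (S ∩ f ⁻¹' {k - 1}).ncard + (S ∩ f ⁻¹' {k}).ncard := by
    intro k
    have : S ∩ f ⁻¹' {k - 1, k} = (S ∩ f ⁻¹' {k - 1}) ∪ (S ∩ f ⁻¹' {k}) := by
      ext v; simp [Set.mem_preimage]; tauto
    rw [this, Set.ncard_union_eq ?_ (Set.toFinite _) (Set.toFinite _)]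
    refine Set.disjoint_left.2 ?_
    rintro v ⟨_, hv1⟩ ⟨_, hv2⟩
    simp only [Set.mem_preimage, Set.mem_singleton_iff] at hv1 hv2
    rw [hv2] at hv1
    exact hm (sub_eq_self.1 hv1.symm)
  simp only [hsplit]
  rw [Finset.sum_add_distrib]
  rw [sum_shift (fun k => (S ∩ f ⁻¹' {k}).ncard), sum_fiber_ncard]
  omega

end Count

section Core

lemma core_connected [Fintype α] {G : SimpleGraph α} (hGc : G.Connected)
    (Col : G.Coloring (Fin 2)) {n : ℕ} (hn : 3 ≤ n) (h2 : Nat.Coprime 2 n)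
    (S : Set (α × Fin n)) (hS1 : S.ncard < n * G.vConn) (hS2 : S.ncard < 2 * G.minDeg) :
    ((G.tensorProd (cycleGraph n)).induce Sᶜ).Connected := by
  classical
  haveI : NeZero n := ⟨by omega⟩
  haveI : NeZero (2*n) := ⟨by omega⟩
  haveI : Nonempty α := hGc.nonempty
  have hone : (1 : ZMod (2*n)) ≠ 0 := by
    haveI : Fact (1 < 2*n) := ⟨by omega⟩
    exact one_ne_zero
  have hcardV : Nat.card (α × Fin n) = Nat.card α * n := by
    rw [Nat.card_prod]
    congr 1
    simp [Nat.card_eq_fintype_card]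
  have hκcard : G.vConn ≤ Nat.card α - 1 := vConn_le_card
  have hαpos : 1 ≤ Nat.card α := Nat.card_pos
  have hSne : ∃ a, a ∉ S := by
    by_contra hcon
    push_neg at hcon
    have hSu : S = Set.univ := Set.eq_univ_of_forall hcon
    rw [hSu, Set.ncard_univ, hcardV] at hS1
    have hmul : n * G.vConn ≤ n * (Nat.card α - 1) := Nat.mul_le_mul_left n hκcard
    have hlt : n * (Nat.card α - 1) < n * Nat.card α :=
      Nat.mul_lt_mul_of_pos_left (by omega) (by omega)
    have hcontra : n * G.vConn < n * G.vConn := by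
      calc n * G.vConn ≤ n * (Nat.card α - 1) := hmul
        _ < n * Nat.card α := hlt
        _ = Nat.card α * n := Nat.mul_comm _ _
        _ < n * G.vConn := hS1
    exact absurd hcontra (lt_irrefl _)
  apply connected_of_rel hSne
  intro a b ha hb
  by_contra hnrel
  -- components
  set P := G.tensorProd (cycleGraph n) with hPdef
  have hCmem : ∀ r : α × Fin n, r ∉ S → r ∈ {w | w ∉ S ∧ Rel P S r w} :=
    fun r hr => ⟨hr, Relation.ReflTransGen.refl⟩
  set Cs : (α × Fin n) → Set (α × Fin n) := fun r => {w | w ∉ S ∧ Rel P S r w} with hCs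
  have hCclosed : ∀ r w w', w ∈ Cs r → Stp P S w w' → w' ∈ Cs r :=
    fun r w w' hw hst => ⟨hst.hb, hw.2.trans (Relation.ReflTransGen.single hst)⟩
  have hdisj : ∀ w, w ∈ Cs a → w ∈ Cs b → False := fun w hwa hwb =>
    hnrel (hwa.2.trans hwb.2.symm)
  -- boundary zone lemma
  have hzone : ∀ (r : α × Fin n) (k : ZMod (2*n)), (∀ w ∈ Cs r, zf Col h2 w ≠ k) →
      (∃ q ∈ Cs r, zf Col h2 q = k + 1 ∨ zf Col h2 q = k - 1) →
      G.minDeg ≤ (S ∩ zf Col h2 ⁻¹' {k}).ncard := by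
    rintro r k hmiss ⟨q, hq, hzq⟩
    obtain ⟨ε, s, hs, hε, hzk⟩ : ∃ ε s, (zE n h2).symm (1, s) = ε ∧ (ε = 1 ∨ ε = -1) ∧
        zf Col h2 q + ε = k := by
      rcases hzq with h | h
      · exact ⟨-1, -1, zE_symm_neg_one h2, Or.inr rfl, by rw [h]; ring⟩
      · exact ⟨1, 1, zE_symm_one h2, Or.inl rfl, by rw [h]; ring⟩
    have hbij := nside_bij Col h2 hn q ε s hs hε
    have hcard1 : (G.neighborSet q.1).ncard
        = ({w | (G.tensorProd (cycleGraph n)).Adj q w ∧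
            zf Col h2 w = zf Col h2 q + ε}).ncard := by
      rw [← hbij.image_eq, Set.ncard_image_of_injOn hbij.injOn]
    have hsub : {w | (G.tensorProd (cycleGraph n)).Adj q w ∧
        zf Col h2 w = zf Col h2 q + ε} ⊆ S ∩ zf Col h2 ⁻¹' {k} := by
      rintro w ⟨hadj, hzw⟩
      have hwk : zf Col h2 w = k := by rw [hzw, hzk]
      refine ⟨?_, hwk⟩
      by_contra hwS
      exact hmiss w (hCclosed r q w hq ⟨hadj, hq.1, hwS⟩) hwk
    calc G.minDeg ≤ (G.neighborSet q.1).ncard := minDeg_le q.1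
      _ = _ := hcard1
      _ ≤ _ := Set.ncard_le_ncard hsub (Set.toFinite _)
  -- mixed copy lemma
  have hmix : ∀ k : ZMod (2*n), (∃ q ∈ Cs a, zf Col h2 q = k ∨ zf Col h2 q = k - 1) →
      (∃ r ∈ Cs b, zf Col h2 r = k ∨ zf Col h2 r = k - 1) →
      G.vConn ≤ (S ∩ zf Col h2 ⁻¹' {k - 1, k}).ncard := by
    rintro k ⟨q, hq, hzq⟩ ⟨r, hr, hzr⟩
    have hψq : psi Col h2 k q.1 = q := psi_eq_self Col h2 k q hzq
    have hψr : psi Col h2 k r.1 = r := psi_eq_self Col h2 k r hzr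
    have hcut : G.IsVertexCut ((psi Col h2 k) ⁻¹' S) := by
      apply isVertexCut_of_not_rel (a := q.1) (b := r.1)
      · show psi Col h2 k q.1 ∉ S
        rw [hψq]; exact hq.1
      · show psi Col h2 k r.1 ∉ S
        rw [hψr]; exact hr.1
      · intro hrel
        have hrel2 : Rel P S (psi Col h2 k q.1) (psi Col h2 k r.1) := by
          refine Relation.ReflTransGen.lift (psi Col h2 k) ?_ _ _ hrel
          rintro x y ⟨hadj, hx, hy⟩
          exact ⟨psi_adj Col h2 hn k hadj, hx, hy⟩
        rw [hψq, hψr] at hrel2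
        exact hdisj r ⟨hr.1, hq.2.trans hrel2⟩ hr
    have hAcard : ((psi Col h2 k) ⁻¹' S).ncard ≤ (S ∩ zf Col h2 ⁻¹' {k - 1, k}).ncard := by
      have himg : (psi Col h2 k) '' ((psi Col h2 k) ⁻¹' S) ⊆ S ∩ zf Col h2 ⁻¹' {k - 1, k} := by
        rintro _ ⟨u, hu, rfl⟩
        refine ⟨hu, ?_⟩
        have hz := zf_psi Col h2 k u
        rcases kstar_mem Col h2 k u with h | h
        · rw [Set.mem_preimage, hz, h]
          exact Set.mem_insert_of_mem _ rfl
        · rw [Set.mem_preimage, hz, h]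
          exact Set.mem_insert _ _
      calc ((psi Col h2 k) ⁻¹' S).ncard
          = ((psi Col h2 k) '' ((psi Col h2 k) ⁻¹' S)).ncard :=
            (Set.ncard_image_of_injective _ (psi_inj Col h2 k)).symm
        _ ≤ _ := Set.ncard_le_ncard himg (Set.toFinite _)
    exact le_trans (vConn_le_of_cut hcut) hAcard
  -- two missed zones is impossible
  have hbigM : ∀ r, r ∉ S → ∀ c0 d0 : ZMod (2*n), c0 ≠ d0 →
      (∀ w ∈ Cs r, zf Col h2 w ≠ c0) → (∀ w ∈ Cs r, zf Col h2 w ≠ d0) → False := by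
    intro r hrS c0 d0 hcd hc0 hd0
    have hMne : {k : ZMod (2*n) | ∀ w ∈ Cs r, zf Col h2 w ≠ k} ≠ Set.univ := by
      intro hu
      have : zf Col h2 r ∈ {k : ZMod (2*n) | ∀ w ∈ Cs r, zf Col h2 w ≠ k} := by
        rw [hu]; exact Set.mem_univ _
      exact this r (hCmem r hrS) rfl
    obtain ⟨c, hcM, d, hdM, hcd', hcrise, hdfall⟩ :=
      zmod_rise_fall hMne ⟨c0, hc0, d0, hd0, hcd⟩
    have h1 : G.minDeg ≤ (S ∩ zf Col h2 ⁻¹' {c}).ncard := by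
      apply hzone r c hcM
      simp only [Set.mem_setOf_eq, not_forall] at hcrise
      obtain ⟨q, hq, hzq⟩ := hcrise
      exact ⟨q, hq, Or.inr (not_ne_iff.1 hzq)⟩
    have h2' : G.minDeg ≤ (S ∩ zf Col h2 ⁻¹' {d}).ncard := by
      apply hzone r d hdM
      simp only [Set.mem_setOf_eq, not_forall] at hdfall
      obtain ⟨q, hq, hzq⟩ := hdfall
      exact ⟨q, hq, Or.inl (not_ne_iff.1 hzq)⟩
    have hdzone : Disjoint (S ∩ zf Col h2 ⁻¹' {c}) (S ∩ zf Col h2 ⁻¹' {d}) := by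
      refine Set.disjoint_left.2 ?_
      rintro w ⟨_, hw1⟩ ⟨_, hw2⟩
      simp only [Set.mem_preimage, Set.mem_singleton_iff] at hw1 hw2
      exact hcd' (hw1 ▸ hw2 ▸ rfl)
    have hun : (S ∩ zf Col h2 ⁻¹' {c}) ∪ (S ∩ zf Col h2 ⁻¹' {d}) ⊆ S :=
      Set.union_subset Set.inter_subset_left Set.inter_subset_left
    have hcount : G.minDeg + G.minDeg ≤ S.ncard := by
      calc G.minDeg + G.minDeg
          ≤ (S ∩ zf Col h2 ⁻¹' {c}).ncard + (S ∩ zf Col h2 ⁻¹' {d}).ncard :=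
            Nat.add_le_add h1 h2'
        _ = ((S ∩ zf Col h2 ⁻¹' {c}) ∪ (S ∩ zf Col h2 ⁻¹' {d})).ncard :=
            (Set.ncard_union_eq hdzone (Set.toFinite _) (Set.toFinite _)).symm
        _ ≤ S.ncard := Set.ncard_le_ncard hun (Set.toFinite _)
    omega
  -- hence every copy meets every component
  have hcopy : ∀ (r : α × Fin n), r ∉ S → ∀ k : ZMod (2*n),
      ∃ q ∈ Cs r, zf Col h2 q = k ∨ zf Col h2 q = k - 1 := by
    intro r hrS k
    by_contra hcon
    push_neg at hcon
    refine hbigM r hrS k (k-1) ?_ (fun w hw => (hcon w hw).1) (fun w hw => (hcon w hw).2)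
    intro hkk
    exact hone (sub_eq_self.1 hkk.symm)
  have hallmix : ∀ k : ZMod (2*n), G.vConn ≤ (S ∩ zf Col h2 ⁻¹' {k - 1, k}).ncard :=
    fun k => hmix k (hcopy a ha k) (hcopy b hb k)
  have hsum := sum_pair_ncard (V := α × Fin n) hone (zf Col h2) S
  have hle : 2*n*G.vConn ≤ ∑ k : ZMod (2*n), (S ∩ zf Col h2 ⁻¹' {k-1,k}).ncard := by
    calc 2*n*G.vConn = ∑ _k : ZMod (2*n), G.vConn := by
          rw [Finset.sum_const, Finset.card_univ, ZMod.card (2*n), smul_eq_mul]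
      _ ≤ _ := Finset.sum_le_sum (fun k _ => hallmix k)
  have hfin : 2 * (n * G.vConn) ≤ 2 * S.ncard := by
    calc 2 * (n * G.vConn) = 2*n*G.vConn := by ring
      _ ≤ _ := hle
      _ = 2 * S.ncard := hsum
  have := Nat.le_of_mul_le_mul_left hfin (by norm_num)
  omega

end Core

section Upper

variable {n : ℕ}

lemma prod_compl_mem {S : Set α} (x : α) (hx : x ∉ S) (i : Fin n) :
    (x, i) ∉ S ×ˢ (Set.univ : Set (Fin n)) := by
  simp [Set.mem_prod, hx]

lemma rel_proj {G : SimpleGraph α} {S : Set α} {v w : α × Fin n}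
    (h : Rel (G.tensorProd (cycleGraph n)) (S ×ˢ Set.univ) v w) : Rel G S v.1 w.1 := by
  refine Relation.ReflTransGen.lift Prod.fst ?_ _ _ h
  rintro x y ⟨hadj, hx, hy⟩
  refine ⟨hadj.1, ?_, ?_⟩
  · intro hc
    exact hx (by simp [Set.mem_prod, hc])
  · intro hc
    exact hy (by simp [Set.mem_prod, hc])

lemma cut_prod {G : SimpleGraph α} (hn : 3 ≤ n) {S : Set α} (hScut : G.IsVertexCut S) :
    (G.tensorProd (cycleGraph n)).IsVertexCut (S ×ˢ Set.univ) := by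
  intro hconn
  apply hScut
  have i0 : Fin n := ⟨0, by omega⟩
  obtain ⟨v⟩ := hconn.nonempty
  have hv1 : v.1.1 ∉ S := by
    intro hc
    exact (v.2 : v.1 ∈ (S ×ˢ Set.univ)ᶜ) (by simp [Set.mem_prod, hc])
  apply connected_of_rel ⟨v.1.1, hv1⟩
  intro x y hx hy
  have hrelP := rel_of_connected hconn (prod_compl_mem x hx i0) (prod_compl_mem y hy i0)
  exact rel_proj hrelP

lemma ncard_prod_univ [Fintype α] (S : Set α) :
    (S ×ˢ (Set.univ : Set (Fin n))).ncard = S.ncard * n := by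
  rw [← Nat.card_coe_set_eq, ← Nat.card_coe_set_eq]
  rw [Nat.card_congr (Equiv.Set.prod S (Set.univ : Set (Fin n))), Nat.card_prod]
  congr 1
  rw [Nat.card_congr (Equiv.Set.univ (Fin n))]
  simp [Nat.card_eq_fintype_card]

lemma minDeg_prod_le [Fintype α] [Nonempty α] {G : SimpleGraph α} (Col : G.Coloring (Fin 2))
    (hn : 3 ≤ n) (h2 : Nat.Coprime 2 n) :
    (G.tensorProd (cycleGraph n)).minDeg ≤ 2 * G.minDeg := by
  haveI : NeZero n := ⟨by omega⟩
  haveI : NeZero (2*n) := ⟨by omega⟩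
  obtain ⟨u, hu⟩ := exists_minDeg (H := G)
  set v : α × Fin n := (u, ⟨0, by omega⟩) with hv
  have htwo : (1 : ZMod (2*n)) ≠ -1 := by
    intro hc
    have h4 : ((2:ℕ) : ZMod (2*n)) = 0 := by
      push_cast
      rw [show (2 : ZMod (2*n)) = 1 - (-1) by ring, ← hc]
      ring
    have h5 := ZMod.val_cast_of_lt (show 2 < 2*n by omega)
    rw [h4, ZMod.val_zero] at h5
    omega
  have hsplit : (G.tensorProd (cycleGraph n)).neighborSet v =
      {w | (G.tensorProd (cycleGraph n)).Adj v w ∧ zf Col h2 w = zf Col h2 v + 1} ∪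
      {w | (G.tensorProd (cycleGraph n)).Adj v w ∧ zf Col h2 w = zf Col h2 v + (-1)} := by
    ext w
    constructor
    · intro hadj
      rcases zf_step Col h2 hn hadj with h | h
      · exact Or.inl ⟨hadj, h⟩
      · exact Or.inr ⟨hadj, by rw [h]; ring⟩
    · rintro (⟨h, _⟩ | ⟨h, _⟩) <;> exact h
  have hdisj : Disjoint {w | (G.tensorProd (cycleGraph n)).Adj v w ∧ zf Col h2 w = zf Col h2 v + 1}
      {w | (G.tensorProd (cycleGraph n)).Adj v w ∧ zf Col h2 w = zf Col h2 v + (-1)} := by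
    refine Set.disjoint_left.2 ?_
    rintro w ⟨_, hw1⟩ ⟨_, hw2⟩
    rw [hw1] at hw2
    exact htwo (by exact add_left_cancel hw2)
  have hc1 : ({w | (G.tensorProd (cycleGraph n)).Adj v w ∧ zf Col h2 w = zf Col h2 v + 1}).ncard
      = G.minDeg := by
    have hbij := nside_bij Col h2 hn v 1 1 (zE_symm_one h2) (Or.inl rfl)
    rw [← hbij.image_eq, Set.ncard_image_of_injOn hbij.injOn, hu]
  have hc2 : ({w | (G.tensorProd (cycleGraph n)).Adj v w ∧ zf Col h2 w = zf Col h2 v + (-1)}).ncard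
      = G.minDeg := by
    have hbij := nside_bij Col h2 hn v (-1) (-1) (zE_symm_neg_one h2) (Or.inr rfl)
    rw [← hbij.image_eq, Set.ncard_image_of_injOn hbij.injOn, hu]
  calc (G.tensorProd (cycleGraph n)).minDeg
      ≤ ((G.tensorProd (cycleGraph n)).neighborSet v).ncard := minDeg_le v
    _ = 2 * G.minDeg := by
        rw [hsplit, Set.ncard_union_eq hdisj (Set.toFinite _) (Set.toFinite _), hc1, hc2]
        ring

lemma vconn_prod_zero [Fintype α] [Nonempty α] {G : SimpleGraph α} (hα : Nat.card α ≤ 1)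
    (hn : 3 ≤ n) : (G.tensorProd (cycleGraph n)).vConn = 0 := by
  haveI : Subsingleton α := by
    refine Fintype.card_le_one_iff_subsingleton.1 ?_
    rwa [← Nat.card_eq_fintype_card]
  obtain ⟨x⟩ := ‹Nonempty α›
  have hcut : (G.tensorProd (cycleGraph n)).IsVertexCut ∅ := by
    apply isVertexCut_of_not_rel (a := (x, ⟨0, by omega⟩)) (b := (x, ⟨1, by omega⟩))
      (Set.notMem_empty _) (Set.notMem_empty _)
    intro hrel
    rcases Relation.ReflTransGen.cases_head hrel with heq | ⟨w, hstep, _⟩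
    · have := congrArg Prod.snd heq
      simp at this
    · exact G.ne_of_adj hstep.adj.1 (Subsingleton.elim _ _)
  have := vConn_le_of_cut hcut
  rw [Set.ncard_empty] at this
  omega

lemma exists_small_cut [Fintype α] {G : SimpleGraph α} (Col : G.Coloring (Fin 2))
    (h3 : 3 ≤ Nat.card α) :
    ∃ W : Set α, G.IsVertexCut W ∧ W.ncard = Nat.card α - 2 := by
  have hcards : Fintype.card (Fin 2) < Fintype.card α := by
    rw [Nat.card_eq_fintype_card] at h3
    simp only [Fintype.card_fin]
    omega
  obtain ⟨x, x', hxx, hcol⟩ := Fintype.exists_ne_map_eq_of_card_lt Col hcards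
  refine ⟨({x, x'} : Set α)ᶜ, ?_, ?_⟩
  · apply isVertexCut_of_not_rel (a := x) (b := x') (by simp) (by simp)
    intro hrel
    rcases Relation.ReflTransGen.cases_head hrel with heq | ⟨u, hstep, _⟩
    · exact hxx heq
    · have hu' := hstep.hb
      simp only [Set.mem_compl_iff, Set.mem_insert_iff, Set.mem_singleton_iff, not_not,
        not_or] at hu'
      have hne := G.ne_of_adj hstep.adj
      have hux' : u = x' := by tauto
      exact (Col.valid (hux' ▸ hstep.adj)) hcol
  · have h := Set.ncard_add_ncard_compl ({x, x'} : Set α)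
    rw [Set.ncard_pair hxx] at h
    omega

lemma minDeg_le_card [Fintype α] [Nonempty α] (G : SimpleGraph α) :
    G.minDeg ≤ Nat.card α - 1 := by
  obtain ⟨v⟩ := ‹Nonempty α›
  have hsub : G.neighborSet v ⊆ {v}ᶜ := by
    intro w hw
    simp only [Set.mem_compl_iff, Set.mem_singleton_iff]
    intro hc
    exact G.loopless.irrefl v (hc ▸ hw)
  have h1 : ({v} : Set α).ncard + ({v}ᶜ : Set α).ncard = Nat.card α :=
    Set.ncard_add_ncard_compl _
  rw [Set.ncard_singleton] at h1
  calc G.minDeg ≤ (G.neighborSet v).ncard := minDeg_le v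
    _ ≤ ({v}ᶜ : Set α).ncard := Set.ncard_le_ncard hsub (Set.toFinite _)
    _ = Nat.card α - 1 := by omega

end Upper

lemma vConn_of_infinite {γ : Type*} [Infinite γ] (H : SimpleGraph γ) : H.vConn = 0 := by
  refine Nat.sInf_eq_zero.2 (Or.inl ?_)
  exact ⟨∅, Set.ncard_empty _, Or.inr (by simp [Nat.card_eq_zero_of_infinite])⟩

end StmtAux

/-- For a connected bipartite graph G and odd n ≥ 3,
κ(G × Cₙ) = min{n·κ(G), 2·δ(G)}. -/
theorem stmt_7 (G : SimpleGraph α) (hGc : G.Connected) (hGb : G.Colorable 2)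
    (n : ℕ) (hn : 3 ≤ n) (hodd : Odd n) :
    (G.tensorProd (cycleGraph n)).vConn = min (n * G.vConn) (2 * G.minDeg) := by
  classical
  open StmtAux in
  rcases finite_or_infinite α with hfin | hinf
  case inr =>
    haveI : Nonempty (Fin n) := ⟨⟨0, by omega⟩⟩
    haveI : Infinite (α × Fin n) := Prod.infinite_of_left
    rw [StmtAux.vConn_of_infinite (G.tensorProd (cycleGraph n)), StmtAux.vConn_of_infinite G]
    simp
  case inl =>
  haveI := Fintype.ofFinite α
  haveI : Nonempty α := hGc.nonempty
  haveI : NeZero n := ⟨by omega⟩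
  obtain ⟨Col⟩ := hGb
  have h2 : Nat.Coprime 2 n := hodd.coprime_two_left
  apply le_antisymm
  · rcases le_total (n * G.vConn) (2 * G.minDeg) with hmin | hmin
    · rw [min_eq_left hmin]
      obtain ⟨S, hSn, hdis⟩ := Nat.sInf_mem (StmtAux.vConn_set_nonempty (H := G))
      replace hSn : S.ncard = G.vConn := hSn
      replace hdis : G.IsVertexCut S ∨ Nat.card α ≤ G.vConn + 1 := by
        rcases hdis with h | h
        · exact Or.inl h
        · exact Or.inr h
      rcases hdis with hcut | hcard
      · calc (G.tensorProd (cycleGraph n)).vConn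
            ≤ (S ×ˢ (Set.univ : Set (Fin n))).ncard :=
              StmtAux.vConn_le_of_cut (StmtAux.cut_prod hn hcut)
          _ = S.ncard * n := StmtAux.ncard_prod_univ S
          _ = n * G.vConn := by rw [hSn]; ring
      · by_cases hα1 : Nat.card α ≤ 1
        · rw [StmtAux.vconn_prod_zero hα1 hn]
          omega
        · by_cases hα3 : 3 ≤ Nat.card α
          · exfalso
            obtain ⟨W, hWcut, hWcard⟩ := StmtAux.exists_small_cut Col hα3
            have hle := StmtAux.vConn_le_of_cut hWcut
            rw [hWcard] at hle
            omega
          · -- Nat.card α = 2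
            exfalso
            have hδ : G.minDeg ≤ 1 := by
              have := StmtAux.minDeg_le_card G
              omega
            have hκ : 1 ≤ G.vConn := by omega
            have : n ≤ n * G.vConn := Nat.le_mul_of_pos_right n (by omega)
            omega
    · rw [min_eq_right hmin]
      calc (G.tensorProd (cycleGraph n)).vConn
          ≤ (G.tensorProd (cycleGraph n)).minDeg := StmtAux.vConn_le_minDeg
        _ ≤ 2 * G.minDeg := StmtAux.minDeg_prod_le Col hn h2
  · apply le_csInf StmtAux.vConn_set_nonempty
    rintro m ⟨S, hSn, hcut | hcard⟩
    · by_contra hlt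
      push_neg at hlt
      have h1 : S.ncard < n * G.vConn := by
        have := min_le_left (n * G.vConn) (2 * G.minDeg)
        omega
      have h2' : S.ncard < 2 * G.minDeg := by
        have := min_le_right (n * G.vConn) (2 * G.minDeg)
        omega
      exact hcut (StmtAux.core_connected hGc Col hn h2 S h1 h2')
    · -- Nat.card (α × Fin n) ≤ m + 1
      have hcardV : Nat.card (α × Fin n) = Nat.card α * n := by
        rw [Nat.card_prod]
        congr 1
        simp [Nat.card_eq_fintype_card]
      rw [hcardV] at hcard
      have hκcard : G.vConn ≤ Nat.card α - 1 := StmtAux.vConn_le_card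
      have hαpos : 1 ≤ Nat.card α := Nat.card_pos
      calc min (n * G.vConn) (2 * G.minDeg) ≤ n * G.vConn := min_le_left _ _
        _ ≤ n * (Nat.card α - 1) := Nat.mul_le_mul_left _ hκcard
        _ ≤ m := by
            have he : n * (Nat.card α - 1) + n = n * Nat.card α := by
              have : Nat.card α - 1 + 1 = Nat.card α := by omega
              calc n * (Nat.card α - 1) + n = n * (Nat.card α - 1 + 1) := by ring
                _ = n * Nat.card α := by rw [this]
            have hmn : Nat.card α * n ≤ m + 1 := hcard
            have hcomm : Nat.card α * n = n * Nat.card α := Nat.mul_comm _ _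
            omega
end
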